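/- arXiv:2506.20191 — 4 statements merged into one kernel-verified Lean document; each statement's English description precedes it below -/
import Mathlib

section
/- Let A, B be real symmetric positive definite matrices and ε ∈ (0,1) with (1−ε)A ⪯ B ⪯ (1+ε)A. Then the spectral norm of log B − log A is at most |log(1−ε)|. -/
open MeasureTheory Set Filter

lemma aux_hasDeriv {a : ℝ} (ha : 0 < a) {t : ℝ} (ht : t ∈ Set.Ici (0:ℝ)) :
    HasDerivAt (fun s => Real.log (1+s) - Real.log (a+s)) ((1+t)⁻¹ - (a+t)⁻¹) t := by
  have h1 : (0:ℝ) < 1 + t := by linarith [ht.out]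
  have h2 : (0:ℝ) < a + t := by linarith [ht.out]
  have d1 : HasDerivAt (fun s : ℝ => Real.log (1+s)) (1+t)⁻¹ t := by
    simpa [Function.comp_def] using (Real.hasDerivAt_log h1.ne').comp t ((hasDerivAt_id t).const_add 1)
  have d2 : HasDerivAt (fun s : ℝ => Real.log (a+s)) (a+t)⁻¹ t := by
    simpa [Function.comp_def] using (Real.hasDerivAt_log h2.ne').comp t ((hasDerivAt_id t).const_add a)
  exact d1.sub d2

lemma aux_tendsto {a : ℝ} (ha : 0 < a) :
    Tendsto (fun s => Real.log (1+s) - Real.log (a+s)) atTop (nhds 0) := by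
  have h : Tendsto (fun s : ℝ => (1+s)/(a+s)) atTop (nhds 1) := by
    have h0 : Tendsto (fun s : ℝ => (1-a)/(a+s)) atTop (nhds 0) :=
      Tendsto.div_atTop tendsto_const_nhds (tendsto_atTop_add_const_left _ a tendsto_id)
    have : ∀ᶠ s : ℝ in atTop, (1:ℝ) + (1-a)/(a+s) = (1+s)/(a+s) := by
      filter_upwards [eventually_gt_atTop 0] with s hs
      have : a + s ≠ 0 := by positivity
      field_simp
      ring
    simpa using Tendsto.congr' this (by simpa using (tendsto_const_nhds (x := (1:ℝ))).add h0)
  have hlog : Tendsto (fun s : ℝ => Real.log ((1+s)/(a+s))) atTop (nhds 0) := by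
    simpa [Function.comp_def] using (Real.continuousAt_log one_ne_zero).tendsto.comp h
  apply hlog.congr'
  filter_upwards [eventually_gt_atTop 0] with s hs
  rw [Real.log_div (by positivity) (by positivity)]

lemma aux_integrable {a : ℝ} (ha : 0 < a) :
    IntegrableOn (fun t : ℝ => (1+t)⁻¹ - (a+t)⁻¹) (Ioi 0) := by
  rcases le_total 1 a with h | h
  · refine integrableOn_Ioi_deriv_of_nonneg' (g := fun s => Real.log (1+s) - Real.log (a+s))
      (fun t ht => aux_hasDeriv ha ht) ?_ (aux_tendsto ha)
    intro t ht
    have h1 : (0:ℝ) < 1 + t := by linarith [ht.out]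
    have h2 : (0:ℝ) < a + t := by linarith [ht.out]
    have : (a+t)⁻¹ ≤ (1+t)⁻¹ := by
      apply inv_anti₀ h1; linarith
    linarith
  · refine integrableOn_Ioi_deriv_of_nonpos' (g := fun s => Real.log (1+s) - Real.log (a+s))
      (fun t ht => aux_hasDeriv ha ht) ?_ (aux_tendsto ha)
    intro t ht
    have h1 : (0:ℝ) < 1 + t := by linarith [ht.out]
    have h2 : (0:ℝ) < a + t := by linarith [ht.out]
    have : (1+t)⁻¹ ≤ (a+t)⁻¹ := by
      apply inv_anti₀ h2; linarith
    linarith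

lemma aux_integral {a : ℝ} (ha : 0 < a) :
    ∫ t in Ioi (0:ℝ), ((1+t)⁻¹ - (a+t)⁻¹) = Real.log a := by
  have := integral_Ioi_of_hasDerivAt_of_tendsto' (a := 0)
    (fun t ht => aux_hasDeriv ha ht) (aux_integrable ha) (aux_tendsto ha)
  simpa using this


open Matrix

variable {n : ℕ} {A : Matrix (Fin n) (Fin n) ℝ}

noncomputable def coords (hA : A.IsHermitian) (x : Fin n → ℝ) : Fin n → ℝ :=
  (star (hA.eigenvectorUnitary : Matrix (Fin n) (Fin n) ℝ)) *ᵥ x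

lemma star_eigU (hA : A.IsHermitian) :
    star (hA.eigenvectorUnitary : Matrix (Fin n) (Fin n) ℝ)
      = (hA.eigenvectorUnitary : Matrix (Fin n) (Fin n) ℝ)ᵀ := by
  rw [star_eq_conjTranspose]
  ext i j
  simp [conjTranspose_apply]

lemma qf_cfc (hA : A.IsHermitian) (f : ℝ → ℝ) (x : Fin n → ℝ) :
    x ⬝ᵥ (hA.cfc f) *ᵥ x = ∑ i, f (hA.eigenvalues i) * (coords hA x i)^2 := by
  set U := (hA.eigenvectorUnitary : Matrix (Fin n) (Fin n) ℝ) with hU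
  rw [Matrix.IsHermitian.cfc, Unitary.conjStarAlgAut_apply, ← mulVec_mulVec, ← mulVec_mulVec, dotProduct_mulVec x U _]
  have hc : x ᵥ* U = coords hA x := by
    rw [coords, star_eigU, mulVec_transpose]
  rw [hc]
  simp [dotProduct, mulVec_diagonal, coords, sq]
  ring_nf
  congr 1
  ext i
  ring

lemma sum_coords_sq (hA : A.IsHermitian) (x : Fin n → ℝ) :
    ∑ i, (coords hA x i)^2 = x ⬝ᵥ x := by
  set U := (hA.eigenvectorUnitary : Matrix (Fin n) (Fin n) ℝ) with hU
  have h2 : (star U)ᵀ = U := by rw [star_eigU hA, transpose_transpose]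
  have key : coords hA x ⬝ᵥ coords hA x = x ⬝ᵥ x := by
    calc coords hA x ⬝ᵥ coords hA x
        = ((star U *ᵥ x) ᵥ* star U) ⬝ᵥ x := by rw [coords, dotProduct_mulVec]
      _ = ((star U)ᵀ *ᵥ (star U *ᵥ x)) ⬝ᵥ x := by rw [mulVec_transpose]
      _ = x ⬝ᵥ x := by
          rw [h2, mulVec_mulVec]
          have h1 : U * star U = 1 := by
            rw [hU, ← Unitary.coe_star]; exact Unitary.coe_mul_star_self _
          rw [h1, one_mulVec]
  rw [← key]
  simp [dotProduct, sq]

lemma starU_mul_U (hA : A.IsHermitian) :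
    star (hA.eigenvectorUnitary : Matrix (Fin n) (Fin n) ℝ)
      * (hA.eigenvectorUnitary : Matrix (Fin n) (Fin n) ℝ) = 1 := by
  rw [← Unitary.coe_star]; exact Unitary.coe_star_mul_self _

lemma U_mul_starU (hA : A.IsHermitian) :
    (hA.eigenvectorUnitary : Matrix (Fin n) (Fin n) ℝ)
      * star (hA.eigenvectorUnitary : Matrix (Fin n) (Fin n) ℝ) = 1 := by
  rw [← Unitary.coe_star]; exact Unitary.coe_mul_star_self _

lemma cfc_mul_cfc (hA : A.IsHermitian) (f g : ℝ → ℝ) :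
    hA.cfc f * hA.cfc g = hA.cfc (fun y => f y * g y) := by
  set U := (hA.eigenvectorUnitary : Matrix (Fin n) (Fin n) ℝ) with hU
  rw [Matrix.IsHermitian.cfc, Matrix.IsHermitian.cfc, Matrix.IsHermitian.cfc]
  simp only [Unitary.conjStarAlgAut_apply]
  have key : ∀ X Y : Matrix (Fin n) (Fin n) ℝ,
      (U * X * star U) * (U * Y * star U) = U * (X * Y) * star U := by
    intro X Y
    calc (U * X * star U) * (U * Y * star U)
        = U * (X * ((star U * U) * Y)) * star U := by noncomm_ring
      _ = U * (X * Y) * star U := by rw [starU_mul_U hA, one_mul]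
  rw [key, diagonal_mul_diagonal]
  have hfg : (fun i => ((RCLike.ofReal (K := ℝ)) ∘ f ∘ hA.eigenvalues) i
      * ((RCLike.ofReal (K := ℝ)) ∘ g ∘ hA.eigenvalues) i)
      = (RCLike.ofReal (K := ℝ)) ∘ (fun y => f y * g y) ∘ hA.eigenvalues := funext fun i => by
    simp only [RCLike.ofReal_real_eq_id, Function.comp_apply, id_eq]
  rw [hfg]

lemma cfc_congr_eig (hA : A.IsHermitian) {f g : ℝ → ℝ}
    (h : ∀ i, f (hA.eigenvalues i) = g (hA.eigenvalues i)) : hA.cfc f = hA.cfc g := by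
  have hfg : (RCLike.ofReal (K := ℝ)) ∘ f ∘ hA.eigenvalues = (RCLike.ofReal (K := ℝ)) ∘ g ∘ hA.eigenvalues :=
    funext fun i => by simp only [RCLike.ofReal_real_eq_id, Function.comp_apply, id_eq, h]
  rw [Matrix.IsHermitian.cfc, Matrix.IsHermitian.cfc, hfg]

lemma cfc_one' (hA : A.IsHermitian) : hA.cfc (fun _ => 1) = 1 := by
  rw [Matrix.IsHermitian.cfc, Unitary.conjStarAlgAut_apply]
  have hd : Matrix.diagonal (RCLike.ofReal ∘ (fun _ : ℝ => (1:ℝ)) ∘ hA.eigenvalues)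
      = (1 : Matrix (Fin n) (Fin n) ℝ) := by
    ext i j
    by_cases hij : i = j <;> simp [diagonal_apply, hij, Matrix.one_apply]
  rw [hd, mul_one, U_mul_starU hA]

lemma cfc_herm (hA : A.IsHermitian) (f : ℝ → ℝ) : (hA.cfc f).IsHermitian := by
  have h : IsSelfAdjoint (cfc f A) := cfc_predicate f A
  rw [hA.cfc_eq] at h
  exact (Matrix.star_eq_conjTranspose (hA.cfc f)).symm.trans h.star_eq

lemma cfc_affine (hA : A.IsHermitian) (r t : ℝ) :
    hA.cfc (fun y => r * y + t) = r • A + t • (1 : Matrix (Fin n) (Fin n) ℝ) := by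
  set U := (hA.eigenvectorUnitary : Matrix (Fin n) (Fin n) ℝ) with hU
  rw [Matrix.IsHermitian.cfc, Unitary.conjStarAlgAut_apply]
  have hd : Matrix.diagonal (RCLike.ofReal ∘ (fun y => r * y + t) ∘ hA.eigenvalues)
      = r • Matrix.diagonal (RCLike.ofReal ∘ hA.eigenvalues)
        + t • (1 : Matrix (Fin n) (Fin n) ℝ) := by
    ext i j
    by_cases hij : i = j <;>
      simp [diagonal_apply, hij, Matrix.one_apply]
  rw [hd, mul_add, add_mul]
  simp only [mul_smul_comm, smul_mul_assoc]
  rw [mul_one, U_mul_starU hA, ← Unitary.conjStarAlgAut_apply (S := ℝ), ← hA.spectral_theorem]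

lemma herm_transpose {M : Matrix (Fin n) (Fin n) ℝ} (hM : M.IsHermitian) : Mᵀ = M := by
  ext i j
  have h1 : Mᴴ i j = M i j := by rw [hM]
  simpa [Matrix.conjTranspose_apply] using h1

lemma dot_sym {M : Matrix (Fin n) (Fin n) ℝ} (hM : M.IsHermitian) (v w : Fin n → ℝ) :
    v ⬝ᵥ M *ᵥ w = w ⬝ᵥ M *ᵥ v := by
  rw [dotProduct_mulVec, ← mulVec_transpose, herm_transpose hM, dotProduct_comm]

lemma psd_qf {M : Matrix (Fin n) (Fin n) ℝ} (hM : M.PosSemidef) (v : Fin n → ℝ) :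
    0 ≤ v ⬝ᵥ M *ᵥ v := by
  simpa using hM.dotProduct_mulVec_nonneg v

lemma inv_qf_le {P R P' R' : Matrix (Fin n) (Fin n) ℝ} (hP : P.PosSemidef)
    (hPh : P.IsHermitian) (hPP' : P * P' = 1) (hRR' : R * R' = 1)
    (hPR : (R - P).PosSemidef) (x : Fin n → ℝ) :
    x ⬝ᵥ R' *ᵥ x ≤ x ⬝ᵥ P' *ᵥ x := by
  have hyR : R *ᵥ (R' *ᵥ x) = x := by rw [mulVec_mulVec, hRR', one_mulVec]
  have hzP : P *ᵥ (P' *ᵥ x) = x := by rw [mulVec_mulVec, hPP', one_mulVec]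
  set y := R' *ᵥ x with hy
  set z := P' *ᵥ x with hz
  have h1 : 0 ≤ y ⬝ᵥ (R - P) *ᵥ y := psd_qf hPR y
  have h2 : 0 ≤ (y - z) ⬝ᵥ P *ᵥ (y - z) := psd_qf hP _
  have e1 : y ⬝ᵥ R *ᵥ y = y ⬝ᵥ x := by rw [hyR]
  have e2 : y ⬝ᵥ P *ᵥ z = y ⬝ᵥ x := by rw [hzP]
  have e3 : z ⬝ᵥ P *ᵥ y = y ⬝ᵥ x := by rw [dot_sym hPh, hzP]
  have e4 : z ⬝ᵥ P *ᵥ z = z ⬝ᵥ x := by rw [hzP]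
  have h1' : 0 ≤ y ⬝ᵥ R *ᵥ y - y ⬝ᵥ P *ᵥ y := by
    rwa [sub_mulVec, dotProduct_sub] at h1
  have h2' : 0 ≤ y ⬝ᵥ P *ᵥ y - y ⬝ᵥ x - (y ⬝ᵥ x - z ⬝ᵥ x) := by
    rw [mulVec_sub, dotProduct_sub, sub_dotProduct, sub_dotProduct, e2, e3, e4] at h2
    linarith
  have hbx : x ⬝ᵥ y = y ⬝ᵥ x := dotProduct_comm _ _
  have hcx : x ⬝ᵥ z = z ⬝ᵥ x := dotProduct_comm _ _
  show x ⬝ᵥ y ≤ x ⬝ᵥ z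
  linarith [e1]

lemma cfc_psd (hA : A.IsHermitian) (f : ℝ → ℝ) (hf : ∀ i, 0 ≤ f (hA.eigenvalues i)) :
    (hA.cfc f).PosSemidef := by
  refine PosSemidef.of_dotProduct_mulVec_nonneg (cfc_herm hA f) fun x => ?_
  rw [star_trivial, qf_cfc]
  exact Finset.sum_nonneg fun i _ => mul_nonneg (hf i) (sq_nonneg _)

open MeasureTheory Set in
lemma log_sum_mono {A B : Matrix (Fin n) (Fin n) ℝ} (hA : A.PosDef) (hB : B.PosDef)
    (r s : ℝ) (hr : 0 < r) (hs : 0 < s) (hPSD : (s • B - r • A).PosSemidef) (x : Fin n → ℝ) :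
    ∑ i, (coords hA.1 x i)^2 * Real.log (r * hA.1.eigenvalues i)
      ≤ ∑ i, (coords hB.1 x i)^2 * Real.log (s * hB.1.eigenvalues i) := by
  have hlamA : ∀ i, 0 < hA.1.eigenvalues i := hA.eigenvalues_pos
  have hlamB : ∀ i, 0 < hB.1.eigenvalues i := hB.eigenvalues_pos
  set c := coords hA.1 x with hc
  set d := coords hB.1 x with hd
  set gA : ℝ → ℝ := fun t => ∑ i, (c i)^2 * ((1+t)⁻¹ - (r * hA.1.eigenvalues i + t)⁻¹) with hgA
  set gB : ℝ → ℝ := fun t => ∑ i, (d i)^2 * ((1+t)⁻¹ - (s * hB.1.eigenvalues i + t)⁻¹) with hgB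
  have intA : IntegrableOn gA (Ioi 0) :=
    integrable_finset_sum _ fun i _ => (aux_integrable (mul_pos hr (hlamA i))).const_mul _
  have intB : IntegrableOn gB (Ioi 0) :=
    integrable_finset_sum _ fun i _ => (aux_integrable (mul_pos hs (hlamB i))).const_mul _
  have iA : ∫ t in Ioi (0:ℝ), gA t = ∑ i, (c i)^2 * Real.log (r * hA.1.eigenvalues i) := by
    rw [hgA, integral_finset_sum _ fun i _ => (aux_integrable (mul_pos hr (hlamA i))).const_mul _]
    congr 1
    funext i
    rw [integral_const_mul, aux_integral (mul_pos hr (hlamA i))]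
  have iB : ∫ t in Ioi (0:ℝ), gB t = ∑ i, (d i)^2 * Real.log (s * hB.1.eigenvalues i) := by
    rw [hgB, integral_finset_sum _ fun i _ => (aux_integrable (mul_pos hs (hlamB i))).const_mul _]
    congr 1
    funext i
    rw [integral_const_mul, aux_integral (mul_pos hs (hlamB i))]
  have mono : ∀ t ∈ Ioi (0:ℝ), gA t ≤ gB t := by
    intro t ht
    have ht0 : (0:ℝ) < t := ht
    set fA : ℝ → ℝ := fun y => (r * y + t)⁻¹ with hfA
    set fB : ℝ → ℝ := fun y => (s * y + t)⁻¹ with hfB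
    have hPmat : r • A + t • (1 : Matrix (Fin n) (Fin n) ℝ) = hA.1.cfc (fun y => r * y + t) :=
      (cfc_affine hA.1 r t).symm
    have hRmat : s • B + t • (1 : Matrix (Fin n) (Fin n) ℝ) = hB.1.cfc (fun y => s * y + t) :=
      (cfc_affine hB.1 s t).symm
    have hPpsd : (r • A + t • (1 : Matrix (Fin n) (Fin n) ℝ)).PosSemidef := by
      rw [hPmat]
      exact cfc_psd _ _ fun i => (add_pos (mul_pos hr (hlamA i)) ht0).le
    have hPh : (r • A + t • (1 : Matrix (Fin n) (Fin n) ℝ)).IsHermitian := hPpsd.1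
    have hPP' : (r • A + t • (1 : Matrix (Fin n) (Fin n) ℝ)) * hA.1.cfc fA = 1 := by
      rw [hPmat, cfc_mul_cfc, cfc_congr_eig hA.1 (g := fun _ => 1)
        (fun i => mul_inv_cancel₀ (add_pos (mul_pos hr (hlamA i)) ht0).ne'), cfc_one']
    have hRR' : (s • B + t • (1 : Matrix (Fin n) (Fin n) ℝ)) * hB.1.cfc fB = 1 := by
      rw [hRmat, cfc_mul_cfc, cfc_congr_eig hB.1 (g := fun _ => 1)
        (fun i => mul_inv_cancel₀ (add_pos (mul_pos hs (hlamB i)) ht0).ne'), cfc_one']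
    have hsub : (s • B + t • (1 : Matrix (Fin n) (Fin n) ℝ))
        - (r • A + t • (1 : Matrix (Fin n) (Fin n) ℝ)) = s • B - r • A := by abel
    have hQ : x ⬝ᵥ (hB.1.cfc fB) *ᵥ x ≤ x ⬝ᵥ (hA.1.cfc fA) *ᵥ x :=
      inv_qf_le hPpsd hPh hPP' hRR' (by rw [hsub]; exact hPSD) x
    have eA : gA t = (x ⬝ᵥ x) * (1+t)⁻¹ - x ⬝ᵥ (hA.1.cfc fA) *ᵥ x := by
      simp only [hgA]
      rw [qf_cfc]
      have : ∀ i, (c i)^2 * ((1+t)⁻¹ - (r * hA.1.eigenvalues i + t)⁻¹)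
          = (c i)^2 * (1+t)⁻¹ - fA (hA.1.eigenvalues i) * (c i)^2 := by
        intro i; rw [hfA]; ring
      rw [Finset.sum_congr rfl fun i _ => this i, Finset.sum_sub_distrib, ← Finset.sum_mul,
        sum_coords_sq]
    have eB : gB t = (x ⬝ᵥ x) * (1+t)⁻¹ - x ⬝ᵥ (hB.1.cfc fB) *ᵥ x := by
      simp only [hgB]
      rw [qf_cfc]
      have : ∀ i, (d i)^2 * ((1+t)⁻¹ - (s * hB.1.eigenvalues i + t)⁻¹)
          = (d i)^2 * (1+t)⁻¹ - fB (hB.1.eigenvalues i) * (d i)^2 := by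
        intro i; rw [hfB]; ring
      rw [Finset.sum_congr rfl fun i _ => this i, Finset.sum_sub_distrib, ← Finset.sum_mul,
        sum_coords_sq]
    rw [eA, eB]
    linarith
  calc ∑ i, (c i)^2 * Real.log (r * hA.1.eigenvalues i) = ∫ t in Ioi (0:ℝ), gA t := iA.symm
    _ ≤ ∫ t in Ioi (0:ℝ), gB t := setIntegral_mono_on intA intB measurableSet_Ioi mono
    _ = ∑ i, (d i)^2 * Real.log (s * hB.1.eigenvalues i) := iB

/-- If `A`, `B` are symmetric positive definite with `(1−ε)A ⪯ B ⪯ (1+ε)A` for `ε ∈ (0,1)`,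
then the spectral norm of `log B − log A` is at most `|log(1−ε)|`. -/
theorem stmt3 {n : ℕ} (A B : Matrix (Fin n) (Fin n) ℝ) (hA : A.PosDef) (hB : B.PosDef)
    (ε : ℝ) (hε : ε ∈ Set.Ioo (0 : ℝ) 1)
    (h1 : (B - (1 - ε) • A).PosSemidef) (h2 : ((1 + ε) • A - B).PosSemidef) :
    ‖Matrix.toEuclideanCLM (𝕜 := ℝ) (hB.1.cfc Real.log - hA.1.cfc Real.log)‖
      ≤ |Real.log (1 - ε)| := by
  obtain ⟨hε0, hε1⟩ := hε
  have h1ε : (0:ℝ) < 1 - ε := by linarith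
  have h2ε : (0:ℝ) < 1 + ε := by linarith
  set M := hB.1.cfc Real.log - hA.1.cfc Real.log with hM
  set K := |Real.log (1 - ε)| with hKdef
  have hlog1 : Real.log (1 - ε) < 0 := Real.log_neg h1ε (by linarith)
  have hK : K = -Real.log (1 - ε) := abs_of_neg hlog1
  have hup : Real.log (1 + ε) ≤ K := by
    have e : Real.log (1 + ε) + Real.log (1 - ε) = Real.log ((1 + ε) * (1 - ε)) :=
      (Real.log_mul h2ε.ne' h1ε.ne').symm
    have e2 : Real.log ((1 + ε) * (1 - ε)) ≤ 0 := Real.log_nonpos (by nlinarith) (by nlinarith)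
    rw [hK]; linarith
  have qfM : ∀ x : Fin n → ℝ, x ⬝ᵥ M *ᵥ x
      = (∑ i, (coords hB.1 x i)^2 * Real.log (hB.1.eigenvalues i))
        - ∑ i, (coords hA.1 x i)^2 * Real.log (hA.1.eigenvalues i) := by
    intro x
    rw [hM, sub_mulVec, dotProduct_sub, qf_cfc, qf_cfc]
    congr 1
    · exact Finset.sum_congr rfl fun i _ => mul_comm _ _
    · exact Finset.sum_congr rfl fun i _ => mul_comm _ _
  have lower : ∀ x : Fin n → ℝ, Real.log (1 - ε) * (x ⬝ᵥ x) ≤ x ⬝ᵥ M *ᵥ x := by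
    intro x
    have hm := log_sum_mono hA hB (1 - ε) 1 h1ε one_pos (by rw [one_smul]; exact h1) x
    have eA : ∑ i, (coords hA.1 x i)^2 * Real.log ((1 - ε) * hA.1.eigenvalues i)
        = Real.log (1 - ε) * (x ⬝ᵥ x)
          + ∑ i, (coords hA.1 x i)^2 * Real.log (hA.1.eigenvalues i) := by
      have : ∀ i, (coords hA.1 x i)^2 * Real.log ((1 - ε) * hA.1.eigenvalues i)
          = (coords hA.1 x i)^2 * Real.log (1 - ε)
            + (coords hA.1 x i)^2 * Real.log (hA.1.eigenvalues i) := by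
        intro i
        rw [Real.log_mul h1ε.ne' (hA.eigenvalues_pos i).ne']
        ring
      rw [Finset.sum_congr rfl fun i _ => this i, Finset.sum_add_distrib, ← Finset.sum_mul,
        sum_coords_sq, mul_comm]
    have eB : ∀ i, Real.log ((1:ℝ) * hB.1.eigenvalues i) = Real.log (hB.1.eigenvalues i) := by
      intro i; rw [one_mul]
    rw [qfM x]
    rw [eA] at hm
    simp only [eB] at hm
    linarith
  have upper : ∀ x : Fin n → ℝ, x ⬝ᵥ M *ᵥ x ≤ Real.log (1 + ε) * (x ⬝ᵥ x) := by
    intro x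
    have hm := log_sum_mono hB hA 1 (1 + ε) one_pos h2ε (by rw [one_smul]; exact h2) x
    have eA : ∑ i, (coords hA.1 x i)^2 * Real.log ((1 + ε) * hA.1.eigenvalues i)
        = Real.log (1 + ε) * (x ⬝ᵥ x)
          + ∑ i, (coords hA.1 x i)^2 * Real.log (hA.1.eigenvalues i) := by
      have : ∀ i, (coords hA.1 x i)^2 * Real.log ((1 + ε) * hA.1.eigenvalues i)
          = (coords hA.1 x i)^2 * Real.log (1 + ε)
            + (coords hA.1 x i)^2 * Real.log (hA.1.eigenvalues i) := by
        intro i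
        rw [Real.log_mul h2ε.ne' (hA.eigenvalues_pos i).ne']
        ring
      rw [Finset.sum_congr rfl fun i _ => this i, Finset.sum_add_distrib, ← Finset.sum_mul,
        sum_coords_sq, mul_comm]
    have eB : ∀ i, Real.log ((1:ℝ) * hB.1.eigenvalues i) = Real.log (hB.1.eigenvalues i) := by
      intro i; rw [one_mul]
    rw [qfM x]
    rw [eA] at hm
    simp only [eB] at hm
    linarith
  have hMherm : M.IsHermitian := (cfc_herm hB.1 _).sub (cfc_herm hA.1 _)
  -- eigenvalue bound
  have hev : ∀ j, |hMherm.eigenvalues j| ≤ K := by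
    intro j
    set v : Fin n → ℝ := ⇑(hMherm.eigenvectorBasis j) with hv
    have hMv : M *ᵥ v = hMherm.eigenvalues j • v := hMherm.mulVec_eigenvectorBasis j
    have hvv : v ⬝ᵥ v = 1 := by
      have hn : ‖hMherm.eigenvectorBasis j‖ = 1 := hMherm.eigenvectorBasis.orthonormal.1 j
      have hi : (inner ℝ (hMherm.eigenvectorBasis j) (hMherm.eigenvectorBasis j) : ℝ) = v ⬝ᵥ v := by
        rw [EuclideanSpace.inner_eq_star_dotProduct]
        rfl
      rw [← hi, real_inner_self_eq_norm_mul_norm, hn, one_mul]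
    have hq : v ⬝ᵥ M *ᵥ v = hMherm.eigenvalues j := by
      rw [hMv]
      simp [dotProduct_smul, hvv, smul_eq_mul]
    have hl := lower v
    have hu := upper v
    rw [hq, hvv, mul_one] at hl hu
    rw [abs_le]
    constructor
    · rw [hK]; linarith
    · linarith
  -- norm bound
  have hKnn : (0:ℝ) ≤ K := abs_nonneg _
  refine ContinuousLinearMap.opNorm_le_bound _ hKnn fun v => ?_
  set u : Fin n → ℝ := WithLp.equiv _ _ v with hu
  have h1' : WithLp.equiv _ _ ((Matrix.toEuclideanCLM (𝕜 := ℝ) M) v) = M *ᵥ u :=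
    ofLp_toEuclideanCLM M v
  have hnorm2 : ‖(Matrix.toEuclideanCLM (𝕜 := ℝ) M) v‖ * ‖(Matrix.toEuclideanCLM (𝕜 := ℝ) M) v‖
      = (M *ᵥ u) ⬝ᵥ (M *ᵥ u) := by
    rw [← real_inner_self_eq_norm_mul_norm, EuclideanSpace.inner_eq_star_dotProduct]
    rw [star_trivial]
    congr 1 <;> exact h1'
  have hvnorm2 : ‖v‖ * ‖v‖ = u ⬝ᵥ u := by
    rw [← real_inner_self_eq_norm_mul_norm, EuclideanSpace.inner_eq_star_dotProduct]
    rw [star_trivial]; rfl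
  have hMM : M * M = hMherm.cfc (fun y => y * y) := by
    have hid : hMherm.cfc (fun y => y) = M := by
      have h0 := cfc_affine hMherm 1 0
      rw [one_smul, zero_smul, add_zero] at h0
      exact (cfc_congr_eig hMherm fun i => by ring).trans h0
    conv_lhs => rw [← hid]
    rw [cfc_mul_cfc]
  have hsq : (M *ᵥ u) ⬝ᵥ (M *ᵥ u) = u ⬝ᵥ (M * M) *ᵥ u := by
    rw [dotProduct_mulVec, ← mulVec_transpose, herm_transpose hMherm, mulVec_mulVec,
      dotProduct_comm]
  have hbound : u ⬝ᵥ (M * M) *ᵥ u ≤ K * K * (u ⬝ᵥ u) := by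
    rw [hMM, qf_cfc]
    have : ∀ i, (hMherm.eigenvalues i * hMherm.eigenvalues i) * (coords hMherm u i)^2
        ≤ K * K * (coords hMherm u i)^2 := by
      intro i
      have h := hev i
      have : hMherm.eigenvalues i * hMherm.eigenvalues i ≤ K * K := by
        calc hMherm.eigenvalues i * hMherm.eigenvalues i
            = |hMherm.eigenvalues i| * |hMherm.eigenvalues i| := (abs_mul_abs_self _).symm
          _ ≤ K * K := mul_self_le_mul_self (abs_nonneg _) h
      exact mul_le_mul_of_nonneg_right this (sq_nonneg _)
    calc ∑ i, (hMherm.eigenvalues i * hMherm.eigenvalues i) * (coords hMherm u i)^2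
        ≤ ∑ i, K * K * (coords hMherm u i)^2 := Finset.sum_le_sum fun i _ => this i
      _ = K * K * ∑ i, (coords hMherm u i)^2 := by rw [Finset.mul_sum]
      _ = K * K * (u ⬝ᵥ u) := by rw [sum_coords_sq]
  have final : ‖(Matrix.toEuclideanCLM (𝕜 := ℝ) M) v‖ * ‖(Matrix.toEuclideanCLM (𝕜 := ℝ) M) v‖
      ≤ (K * ‖v‖) * (K * ‖v‖) := by
    rw [hnorm2, hsq]
    calc u ⬝ᵥ (M * M) *ᵥ u ≤ K * K * (u ⬝ᵥ u) := hbound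
      _ = (K * ‖v‖) * (K * ‖v‖) := by rw [← hvnorm2]; ring
  nlinarith [norm_nonneg ((Matrix.toEuclideanCLM (𝕜 := ℝ) M) v), norm_nonneg v,
    mul_nonneg hKnn (norm_nonneg v)]
end

section
/- Let Q = P Pᵀ where P ∈ {0,1}^{L×M} has exactly one 1 in each row. Then X* := Q is feasible for the SDP {maximize Tr(QX) subject to diag(X)=1_L, X ⪰ 0} and attains the optimal value 1ᵀ Q 1; moreover any feasible X is optimal if and only if X_{kl} = 1 whenever Q_{kl} = 1. -/
open Matrix

private lemma entry_le_one {L : ℕ} (X : Matrix (Fin L) (Fin L) ℝ) (hX : X.PosSemidef)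
    (hd : ∀ k, X k k = 1) (k l : Fin L) : X k l ≤ 1 := by
  have hsym : X l k = X k l := by
    have := hX.1.apply k l
    simpa using this
  have h := hX.dotProduct_mulVec_nonneg ((Pi.single k (1:ℝ) - Pi.single l (1:ℝ) : Fin L → ℝ))
  simp [mulVec_sub, dotProduct_sub, sub_dotProduct, mulVec_single, hd, hsym] at h
  linarith

/-- With `Q = P Pᵀ` for a 0/1 matrix `P` having exactly one 1 per row: `Q` is feasible for the
SDP (unit diagonal, PSD), attains the value `1ᵀ Q 1`, this value bounds `Tr(QX)` over all
feasible `X`, and a feasible `X` is optimal iff `X_{kl} = 1` whenever `Q_{kl} = 1`. -/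
theorem stmt5 {L M : ℕ} (P : Matrix (Fin L) (Fin M) ℝ)
    (hP : ∀ k, ∃ m, ∀ m', P k m' = if m' = m then 1 else 0) :
    (∀ k, (P * Pᵀ) k k = 1) ∧ (P * Pᵀ).PosSemidef ∧
    ((P * Pᵀ) * (P * Pᵀ)).trace = (1 : Fin L → ℝ) ⬝ᵥ (P * Pᵀ) *ᵥ (1 : Fin L → ℝ) ∧
    ∀ X : Matrix (Fin L) (Fin L) ℝ, X.PosSemidef → (∀ k, X k k = 1) →
      (((P * Pᵀ) * X).trace ≤ (1 : Fin L → ℝ) ⬝ᵥ (P * Pᵀ) *ᵥ (1 : Fin L → ℝ) ∧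
       (((P * Pᵀ) * X).trace = (1 : Fin L → ℝ) ⬝ᵥ (P * Pᵀ) *ᵥ (1 : Fin L → ℝ) ↔
         ∀ k l, (P * Pᵀ) k l = 1 → X k l = 1)) := by
  choose f hf using hP
  have hQ : ∀ k l, (P * Pᵀ) k l = if f k = f l then 1 else 0 := by
    intro k l
    simp only [mul_apply, transpose_apply, hf]
    by_cases h : f k = f l <;> simp [h, Finset.sum_ite_eq', eq_comm]
  have hdiagQ : ∀ k, (P * Pᵀ) k k = 1 := by intro k; simp [hQ]
  have hpsdQ : (P * Pᵀ).PosSemidef := by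
    have := Matrix.posSemidef_self_mul_conjTranspose P
    simpa using this
  -- trace formula
  have htr : ∀ X : Matrix (Fin L) (Fin L) ℝ,
      ((P * Pᵀ) * X).trace = ∑ p : Fin L × Fin L, (if f p.1 = f p.2 then X p.2 p.1 else 0) := by
    intro X
    rw [Fintype.sum_prod_type]
    rw [show P * Pᵀ = Matrix.of fun k l => if f k = f l then (1:ℝ) else 0 by ext k l; exact hQ k l]
    simp [trace, Matrix.diag, mul_apply, hQ, ite_mul]
  have hrhs : (1 : Fin L → ℝ) ⬝ᵥ (P * Pᵀ) *ᵥ (1 : Fin L → ℝ)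
      = ∑ p : Fin L × Fin L, (if f p.1 = f p.2 then (1:ℝ) else 0) := by
    rw [Fintype.sum_prod_type]
    simp [dotProduct, mulVec, hQ]
  refine ⟨hdiagQ, hpsdQ, ?_, ?_⟩
  · rw [htr, hrhs]
    refine Finset.sum_congr rfl fun p _ => ?_
    by_cases h : f p.1 = f p.2
    · rw [if_pos h, if_pos h, hQ, if_pos h.symm]
    · rw [if_neg h, if_neg h]
  · intro X hX hd
    have hle : ∀ p : Fin L × Fin L,
        (if f p.1 = f p.2 then X p.2 p.1 else 0) ≤ (if f p.1 = f p.2 then (1:ℝ) else 0) := by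
      intro p
      by_cases h : f p.1 = f p.2 <;> simp [h, entry_le_one X hX hd]
    have hsum := Finset.sum_le_sum (fun p (_ : p ∈ Finset.univ) => hle p)
    constructor
    · rw [htr, hrhs]; exact hsum
    · rw [htr, hrhs]
      rw [Finset.sum_eq_sum_iff_of_le (fun p _ => hle p)]
      constructor
      · intro h k l hQkl
        have hfk : f k = f l := by
          by_contra hc
          rw [hQ] at hQkl
          simp [hc] at hQkl
        have h1 := h (l, k) (Finset.mem_univ _)
        simp [hfk.symm] at h1
        exact h1
      · intro h p _
        by_cases hc : f p.1 = f p.2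
        · have : X p.2 p.1 = 1 := by
            apply h
            rw [hQ]
            simp [hc]
          simp [hc, this]
        · simp [hc]
end

section
/- Fix a partition I_1,…,I_M of {1,…,L} with |I_m| = L_m, and let Q be the 0/1 matrix with Q_{kl} = 1 iff k,l lie in the same I_m. The unique minimizer of the von Neumann entropy S(X) = Tr(X log X) − Tr(X) over symmetric PSD matrices X with X_{I_m,I_m} = 1_{L_m} 1_{L_m}ᵀ for all m is X = Q itself. -/
open Matrix Finset Real

namespace Stmt11Aux


variable {L M : ℕ} (r : Fin L → Fin M)

/-- real cardinality of fiber m -/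
noncomputable def fib (m : Fin M) : ℝ := ∑ k : Fin L, if r k = m then (1:ℝ) else 0

/-- normalized indicator of fiber m -/
noncomputable def uhat (m : Fin M) : Fin L → ℝ :=
  fun k => if r k = m then (Real.sqrt (fib r m))⁻¹ else 0

lemma fib_nonneg (m : Fin M) : 0 ≤ fib r m := by
  apply Finset.sum_nonneg; intro k _; positivity

lemma fib_ge_one (hr : Function.Surjective r) (m : Fin M) : 1 ≤ fib r m := by
  obtain ⟨k, hk⟩ := hr m
  classical
  calc (1:ℝ) = ∑ k' ∈ {k}, if r k' = m then (1:ℝ) else 0 := by rw [Finset.sum_singleton, if_pos hk]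
  _ ≤ fib r m := Finset.sum_le_sum_of_subset_of_nonneg (by simp) (by intro i _ _; positivity)

lemma sqrt_fib_pos (hr : Function.Surjective r) (m : Fin M) : 0 < Real.sqrt (fib r m) := by
  have := fib_ge_one r hr m; positivity

lemma sq_sqrt_fib (m : Fin M) : Real.sqrt (fib r m) * Real.sqrt (fib r m) = fib r m :=
  Real.mul_self_sqrt (fib_nonneg r m)

lemma uhat_orthonormal (hr : Function.Surjective r) (m m' : Fin M) :
    ∑ k, uhat r m k * uhat r m' k = if m = m' then 1 else 0 := by
  classical
  rcases eq_or_ne m m' with rfl | h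
  · simp only [if_pos rfl, uhat, ↓reduceIte]
    have hs := sqrt_fib_pos r hr m
    have : ∀ k : Fin L, (if r k = m then (Real.sqrt (fib r m))⁻¹ else 0)
        * (if r k = m then (Real.sqrt (fib r m))⁻¹ else 0)
        = (Real.sqrt (fib r m) * Real.sqrt (fib r m))⁻¹ * (if r k = m then (1:ℝ) else 0) := by
      intro k; by_cases hk : r k = m <;> simp [hk, mul_inv]
    rw [Finset.sum_congr rfl (fun k _ => this k), ← Finset.mul_sum]
    rw [sq_sqrt_fib, ← fib]
    have h1 : fib r m ≠ 0 := by have := fib_ge_one r hr m; linarith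
    field_simp
  · simp only [if_neg h, uhat]
    apply Finset.sum_eq_zero; intro k _
    by_cases hk : r k = m
    · have : r k ≠ m' := hk ▸ h; rw [if_pos hk, if_neg this, mul_zero]
    · simp [hk]


variable {L M : ℕ}

lemma basis_on {A : Matrix (Fin L) (Fin L) ℝ} (hA : A.IsHermitian) (i j : Fin L) :
    ∑ k, hA.eigenvectorBasis i k * hA.eigenvectorBasis j k = if i = j then 1 else 0 := by
  have := orthonormal_iff_ite.mp hA.eigenvectorBasis.orthonormal i j
  simpa [PiLp.inner_apply, RCLike.inner_apply, conj_trivial, mul_comm] using this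

lemma basis_complete {A : Matrix (Fin L) (Fin L) ℝ} (hA : A.IsHermitian) (k k' : Fin L) :
    ∑ i, hA.eigenvectorBasis i k * hA.eigenvectorBasis i k' = if k = k' then 1 else 0 := by
  classical
  set V : Matrix (Fin L) (Fin L) ℝ := Matrix.of (fun i k => hA.eigenvectorBasis i k) with hV
  have h1 : V * Vᵀ = 1 := by
    ext i j
    simp only [mul_apply, transpose_apply, hV, of_apply, one_apply]
    exact basis_on hA i j
  have h2 : Vᵀ * V = 1 := mul_eq_one_comm.mp h1
  have := congrFun (congrFun h2 k) k'
  simpa [mul_apply, transpose_apply, hV, one_apply] using this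

lemma spec_apply {A : Matrix (Fin L) (Fin L) ℝ} (hA : A.IsHermitian) (k l : Fin L) :
    A k l = ∑ i, hA.eigenvalues i * (hA.eigenvectorBasis i k * hA.eigenvectorBasis i l) := by
  classical
  have hsym : ∀ a b, A a b = A b a := fun a b => by simpa using hA.apply b a
  have hmv : ∀ i l', (∑ k', A l' k' * hA.eigenvectorBasis i k')
      = hA.eigenvalues i * hA.eigenvectorBasis i l' := by
    intro i l'
    have := congrFun (hA.mulVec_eigenvectorBasis i) l'
    simpa [Matrix.mulVec, dotProduct] using this
  calc A k l = ∑ k', (if k = k' then 1 else 0) * A k' l := by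
        simp [ite_mul]
    _ = ∑ k', (∑ i, hA.eigenvectorBasis i k * hA.eigenvectorBasis i k') * A k' l := by
        simp_rw [basis_complete hA]
    _ = ∑ i, hA.eigenvectorBasis i k * ∑ k', A l k' * hA.eigenvectorBasis i k' := by
        simp_rw [Finset.sum_mul]
        rw [Finset.sum_comm]
        congr 1; ext i
        rw [Finset.mul_sum]
        congr 1; ext k'
        rw [hsym k' l]; ring
    _ = ∑ i, hA.eigenvalues i * (hA.eigenvectorBasis i k * hA.eigenvectorBasis i l) := by
        congr 1; ext i
        rw [hmv i l]; ring


variable {L : ℕ}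

lemma trace_mul_cfc {A : Matrix (Fin L) (Fin L) ℝ} (hA : A.IsHermitian) (f : ℝ → ℝ) :
    (A * hA.cfc f).trace = ∑ i, hA.eigenvalues i * f (hA.eigenvalues i) := by
  set U := (hA.eigenvectorUnitary : Matrix (Fin L) (Fin L) ℝ) with hUdef
  have hU : star U * U = 1 := Unitary.coe_star_mul_self hA.eigenvectorUnitary
  have h0 := congrArg (fun B => B * hA.cfc f) hA.spectral_theorem
  simp only [Unitary.conjStarAlgAut_apply, Unitary.coe_star] at h0
  have h1 : A * hA.cfc f
      = U * diagonal (fun i => hA.eigenvalues i * f (hA.eigenvalues i)) * star U := by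
    rw [h0, Matrix.IsHermitian.cfc, Unitary.conjStarAlgAut_apply]
    have : (U * diagonal (RCLike.ofReal ∘ hA.eigenvalues) * star U)
        * (U * diagonal (RCLike.ofReal ∘ f ∘ hA.eigenvalues) * star U)
        = U * (diagonal (RCLike.ofReal ∘ hA.eigenvalues) * (star U * U)
            * diagonal (RCLike.ofReal ∘ f ∘ hA.eigenvalues)) * star U := by
      simp only [mul_assoc]
    rw [this, hU, mul_one, diagonal_mul_diagonal]
    rfl
  rw [h1, Matrix.trace_mul_cycle, hU, one_mul, trace_diagonal]


variable {L M : ℕ}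

/-- coefficient of eigenvector i on normalized fiber indicator m -/
noncomputable def coef {A : Matrix (Fin L) (Fin L) ℝ} (hA : A.IsHermitian)
    (r : Fin L → Fin M) (i : Fin L) (m : Fin M) : ℝ :=
  ∑ k, hA.eigenvectorBasis i k * uhat r m k

/-- Parseval: the coefficient vectors (over i) are orthonormal in m. -/
lemma sum_coef_mul {A : Matrix (Fin L) (Fin L) ℝ} (hA : A.IsHermitian)
    (r : Fin L → Fin M) (hr : Function.Surjective r) (m m' : Fin M) :
    ∑ i, coef hA r i m * coef hA r i m' = if m = m' then 1 else 0 := by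
  classical
  have : ∀ i, coef hA r i m * coef hA r i m'
      = ∑ k, ∑ k', (hA.eigenvectorBasis i k * hA.eigenvectorBasis i k')
          * (uhat r m k * uhat r m' k') := by
    intro i
    rw [coef, coef, Finset.sum_mul_sum]
    congr 1; ext k; congr 1; ext k'; ring
  rw [Finset.sum_congr rfl (fun i _ => this i)]
  rw [Finset.sum_comm]
  have : ∀ k, ∑ i, ∑ k', (hA.eigenvectorBasis i k * hA.eigenvectorBasis i k')
          * (uhat r m k * uhat r m' k')
      = uhat r m k * uhat r m' k := by
    intro k
    rw [Finset.sum_comm]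
    have h1 : ∀ k', ∑ i, (hA.eigenvectorBasis i k * hA.eigenvectorBasis i k')
          * (uhat r m k * uhat r m' k')
        = (if k = k' then 1 else 0) * (uhat r m k * uhat r m' k') := by
      intro k'
      rw [← Finset.sum_mul, basis_complete hA]
    rw [Finset.sum_congr rfl (fun k' _ => h1 k')]
    simp [ite_mul]
  rw [Finset.sum_congr rfl (fun k _ => this k)]
  exact uhat_orthonormal r hr m m'

/-- quadratic form of A on normalized indicators equals fiber size. -/
lemma sum_ev_coef_sq {A : Matrix (Fin L) (Fin L) ℝ} (hA : A.PosSemidef)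
    (r : Fin L → Fin M) (hr : Function.Surjective r)
    (hc : ∀ k l, r k = r l → A k l = 1) (m : Fin M) :
    ∑ i, hA.1.eigenvalues i * coef hA.1 r i m ^ 2 = fib r m := by
  classical
  have key : ∑ k, ∑ l, uhat r m k * A k l * uhat r m l = fib r m := by
    have : ∀ k l, uhat r m k * A k l * uhat r m l
        = (fib r m)⁻¹ * ((if r k = m then 1 else 0) * (if r l = m then 1 else 0)) := by
      intro k l
      by_cases hk : r k = m <;> by_cases hl : r l = m
      · rw [hc k l (hk.trans hl.symm)]
        simp only [uhat, if_pos hk, if_pos hl]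
        rw [mul_one, ← mul_inv, sq_sqrt_fib]
        ring
      · simp [uhat, hk, hl]
      · simp [uhat, hk, hl]
      · simp [uhat, hk, hl]
    simp_rw [this, ← Finset.mul_sum]
    rw [← Finset.sum_mul]
    have h1 : fib r m ≠ 0 := by have := fib_ge_one r hr m; linarith
    show (fib r m)⁻¹ * (fib r m * fib r m) = fib r m
    field_simp
  calc ∑ i, hA.1.eigenvalues i * coef hA.1 r i m ^ 2
      = ∑ i, ∑ k, ∑ l, hA.1.eigenvalues i
          * ((hA.1.eigenvectorBasis i k * uhat r m k)
            * (hA.1.eigenvectorBasis i l * uhat r m l)) := by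
        congr 1; ext i
        rw [coef, sq, Finset.sum_mul_sum, Finset.mul_sum]
        congr 1; ext k
        rw [Finset.mul_sum]
        try congr 1
        try ext l
        try ring
    _ = ∑ k, ∑ l, ∑ i, hA.1.eigenvalues i
          * ((hA.1.eigenvectorBasis i k * uhat r m k)
            * (hA.1.eigenvectorBasis i l * uhat r m l)) := by
        rw [Finset.sum_comm]
        congr 1; ext k
        rw [Finset.sum_comm]
    _ = ∑ k, ∑ l, uhat r m k * A k l * uhat r m l := by
        congr 1; ext k; congr 1; ext l
        rw [spec_apply hA.1 k l, Finset.mul_sum, Finset.sum_mul]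
        congr 1; ext i; ring
    _ = fib r m := key

/-- vectors supported on one fiber with zero sum are killed by A -/
lemma mulVec_block_zero {A : Matrix (Fin L) (Fin L) ℝ} (hA : A.PosSemidef)
    {r : Fin L → Fin M} (hc : ∀ k l, r k = r l → A k l = 1) (m : Fin M)
    (w : Fin L → ℝ) (hw1 : ∀ k, r k ≠ m → w k = 0) (hw2 : ∑ k, w k = 0) :
    A *ᵥ w = 0 := by
  rw [← hA.dotProduct_mulVec_zero_iff w]
  have hsw : star w = w := by funext k; simp
  rw [hsw]
  have hterm : ∀ k l, w k * (A k l * w l) = w k * w l := by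
    intro k l
    by_cases hk : w k = 0
    · simp [hk]
    by_cases hl : w l = 0
    · simp [hl]
    have hrk : r k = m := by by_contra h; exact hk (hw1 k h)
    have hrl : r l = m := by by_contra h; exact hl (hw1 l h)
    rw [hc k l (hrk.trans hrl.symm)]; ring
  calc w ⬝ᵥ A *ᵥ w = ∑ k, ∑ l, w k * (A k l * w l) := by
        simp only [dotProduct, Matrix.mulVec, Finset.mul_sum]
    _ = ∑ k, ∑ l, w k * w l := by simp_rw [hterm]
    _ = (∑ k, w k) * (∑ l, w l) := by rw [Finset.sum_mul_sum]
    _ = 0 := by rw [hw2, zero_mul]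

/-- projection of a vector onto the span of normalized fiber indicators -/
noncomputable def projv (r : Fin L → Fin M) (y : Fin L → ℝ) : Fin L → ℝ :=
  fun k => ∑ m, (∑ l, y l * uhat r m l) * uhat r m k

lemma uhat_eq_zero {r : Fin L → Fin M} {m : Fin M} {k : Fin L} (h : r k ≠ m) :
    uhat r m k = 0 := by simp [uhat, h]

lemma mulVec_sub_projv {A : Matrix (Fin L) (Fin L) ℝ} (hA : A.PosSemidef)
    {r : Fin L → Fin M} (hr : Function.Surjective r)
    (hc : ∀ k l, r k = r l → A k l = 1) (y : Fin L → ℝ) :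
    A *ᵥ (y - projv r y) = 0 := by
  classical
  set z := y - projv r y with hz
  set w : Fin M → (Fin L → ℝ) := fun m k => if r k = m then z k else 0 with hw
  have hzsum : z = ∑ m, w m := by
    funext k
    rw [Finset.sum_apply]
    simp only [hw]
    rw [Finset.sum_ite_eq univ (r k) (fun _ => z k)]
    simp
  have hwblock : ∀ m, A *ᵥ w m = 0 := by
    intro m
    apply mulVec_block_zero hA hc m
    · intro k hk; simp [hw, hk]
    · -- block sum is zero
      set s := Real.sqrt (fib r m) with hs
      have hs0 : s ≠ 0 := by have := sqrt_fib_pos r hr m; linarith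
      set S := ∑ k, (if r k = m then y k else 0) with hS
      have hd : (∑ l, y l * uhat r m l) = S * s⁻¹ := by
        rw [hS, Finset.sum_mul]
        congr 1; ext l
        by_cases h : r l = m <;> simp [uhat, h, hs]
      have hterm : ∀ k, w m k
          = (if r k = m then y k else 0) - (if r k = m then (1:ℝ) else 0) * (S * (s⁻¹ * s⁻¹)) := by
        intro k
        by_cases hk : r k = m
        · simp only [hw, hz, if_pos hk, Pi.sub_apply]
          have hproj : projv r y k = (∑ l, y l * uhat r m l) * uhat r m k := by
            rw [projv]
            apply Finset.sum_eq_single_of_mem m (Finset.mem_univ m)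
            intro m' _ hm'
            have : uhat r m' k = 0 := uhat_eq_zero (by rw [hk]; exact fun h => hm' h.symm)
            rw [this, mul_zero]
          rw [hproj, hd]
          have : uhat r m k = s⁻¹ := by simp [uhat, hk, hs]
          rw [this]; ring
        · simp [hw, hk]
      rw [Finset.sum_congr rfl (fun k _ => hterm k), Finset.sum_sub_distrib, ← Finset.sum_mul]
      have : (∑ k, if r k = m then (1:ℝ) else 0) = s * s := (sq_sqrt_fib r m).symm
      rw [this]
      have : s * s * (S * (s⁻¹ * s⁻¹)) = S := by field_simp
      rw [this, hS, sub_self]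
  rw [hzsum, ← Matrix.mulVecLin_apply, map_sum]
  simp only [Matrix.mulVecLin_apply]
  rw [Finset.sum_congr rfl (fun m _ => hwblock m)]
  simp

lemma dot_mulVec_symm {A : Matrix (Fin L) (Fin L) ℝ} (hA : A.IsHermitian) (y z : Fin L → ℝ) :
    ∑ k, y k * (A *ᵥ z) k = ∑ k, z k * (A *ᵥ y) k := by
  have hsym : ∀ a b, A a b = A b a := fun a b => by simpa using hA.apply b a
  simp only [Matrix.mulVec, dotProduct, Finset.mul_sum]
  rw [Finset.sum_comm]
  congr 1; ext k; congr 1; ext l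
  rw [hsym l k]; ring

lemma sum_coef_sq_eq_one {A : Matrix (Fin L) (Fin L) ℝ} (hA : A.PosSemidef)
    {r : Fin L → Fin M} (hr : Function.Surjective r)
    (hc : ∀ k l, r k = r l → A k l = 1) (i : Fin L)
    (hi : hA.1.eigenvalues i ≠ 0) :
    ∑ m, coef hA.1 r i m ^ 2 = 1 := by
  classical
  set y : Fin L → ℝ := (hA.1.eigenvectorBasis i : Fin L → ℝ) with hy
  have h0 : A *ᵥ (y - projv r y) = 0 := mulVec_sub_projv hA hr hc y
  have h1 : ∑ k, y k * (A *ᵥ (y - projv r y)) k = 0 := by rw [h0]; simp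
  rw [dot_mulVec_symm hA.1] at h1
  have hAy : A *ᵥ y = hA.1.eigenvalues i • y := hA.1.mulVec_eigenvectorBasis i
  rw [hAy] at h1
  have h2 : ∑ k, (y - projv r y) k * (hA.1.eigenvalues i • y) k
      = hA.1.eigenvalues i * (1 - ∑ m, coef hA.1 r i m ^ 2) := by
    have hyy : ∑ k, y k * y k = 1 := by
      have := basis_on hA.1 i i; simpa using this
    have hpy : ∑ k, projv r y k * y k = ∑ m, coef hA.1 r i m ^ 2 := by
      simp_rw [projv, Finset.sum_mul]
      rw [Finset.sum_comm]
      congr 1; ext m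
      rw [coef, sq, Finset.sum_mul_sum]
      simp only [← hy]
      rw [Finset.sum_comm]
      congr 1; ext k; congr 1; ext x
      ring
    calc ∑ k, (y - projv r y) k * (hA.1.eigenvalues i • y) k
        = hA.1.eigenvalues i * ((∑ k, y k * y k) - ∑ k, projv r y k * y k) := by
          rw [mul_sub, Finset.mul_sum, Finset.mul_sum, ← Finset.sum_sub_distrib]
          congr 1; ext k
          simp only [Pi.sub_apply, Pi.smul_apply, smul_eq_mul]
          ring
      _ = hA.1.eigenvalues i * (1 - ∑ m, coef hA.1 r i m ^ 2) := by rw [hyy, hpy]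
  rw [h2] at h1
  rcases mul_eq_zero.mp h1 with h | h
  · exact absurd h hi
  · linarith


lemma coef_sq_sum_one {A : Matrix (Fin L) (Fin L) ℝ} (hA : A.IsHermitian)
    {r : Fin L → Fin M} (hr : Function.Surjective r) (m : Fin M) :
    ∑ i, coef hA r i m ^ 2 = 1 := by
  have := sum_coef_mul hA r hr m m
  rw [if_pos rfl] at this
  rw [← this]
  congr 1; ext i; rw [sq]

lemma sum_sum_coef_g {A : Matrix (Fin L) (Fin L) ℝ} (hA : A.PosSemidef)
    {r : Fin L → Fin M} (hr : Function.Surjective r)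
    (hc : ∀ k l, r k = r l → A k l = 1) :
    ∑ m, ∑ i, coef hA.1 r i m ^ 2
        * (hA.1.eigenvalues i * Real.log (hA.1.eigenvalues i))
      = ∑ i, hA.1.eigenvalues i * Real.log (hA.1.eigenvalues i) := by
  rw [Finset.sum_comm]
  congr 1; ext i
  rw [← Finset.sum_mul]
  by_cases h : hA.1.eigenvalues i = 0
  · simp [h]
  · rw [sum_coef_sq_eq_one hA hr hc i h, one_mul]

lemma jensen_fib {A : Matrix (Fin L) (Fin L) ℝ} (hA : A.PosSemidef)
    {r : Fin L → Fin M} (hr : Function.Surjective r)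
    (hc : ∀ k l, r k = r l → A k l = 1) (m : Fin M) :
    fib r m * Real.log (fib r m)
      ≤ ∑ i, coef hA.1 r i m ^ 2
          * (hA.1.eigenvalues i * Real.log (hA.1.eigenvalues i)) := by
  have h₀ : ∀ i ∈ univ, (0:ℝ) ≤ coef hA.1 r i m ^ 2 := fun i _ => sq_nonneg _
  have h₁ : ∑ i, coef hA.1 r i m ^ 2 = 1 := coef_sq_sum_one hA.1 hr m
  have hmem : ∀ i ∈ univ, hA.1.eigenvalues i ∈ Set.Ici (0:ℝ) :=
    fun i _ => hA.eigenvalues_nonneg i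
  have hJ := Real.convexOn_mul_log.map_sum_le h₀ h₁ hmem
  simp only [smul_eq_mul] at hJ
  have hsum : ∑ i, coef hA.1 r i m ^ 2 * hA.1.eigenvalues i = fib r m := by
    rw [← sum_ev_coef_sq hA r hr hc m]
    congr 1; ext i; ring
  rwa [hsum] at hJ

lemma entropy_le {A : Matrix (Fin L) (Fin L) ℝ} (hA : A.PosSemidef)
    {r : Fin L → Fin M} (hr : Function.Surjective r)
    (hc : ∀ k l, r k = r l → A k l = 1) :
    ∑ m, fib r m * Real.log (fib r m)
      ≤ ∑ i, hA.1.eigenvalues i * Real.log (hA.1.eigenvalues i) := by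
  rw [← sum_sum_coef_g hA hr hc]
  exact Finset.sum_le_sum (fun m _ => jensen_fib hA hr hc m)

lemma entropy_eq {A : Matrix (Fin L) (Fin L) ℝ} (hA : A.PosSemidef)
    {r : Fin L → Fin M} (hr : Function.Surjective r)
    (hc : ∀ k l, r k = r l → A k l = 1)
    (heq : ∑ i, hA.1.eigenvalues i * Real.log (hA.1.eigenvalues i)
      = ∑ m, fib r m * Real.log (fib r m)) :
    ∀ k l, A k l = if r k = r l then 1 else 0 := by
  classical
  have htot : ∑ m, fib r m * Real.log (fib r m)
      = ∑ m, ∑ i, coef hA.1 r i m ^ 2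
          * (hA.1.eigenvalues i * Real.log (hA.1.eigenvalues i)) := by
    rw [sum_sum_coef_g hA hr hc, heq]
  have hEq := (Finset.sum_eq_sum_iff_of_le
    (fun m (_ : m ∈ univ) => jensen_fib hA hr hc m)).mp htot
  -- equality in Jensen forces eigenvalues to equal fiber sizes
  have hlam_eq : ∀ m i, coef hA.1 r i m ≠ 0 → hA.1.eigenvalues i = fib r m := by
    intro m i hcne
    have h₀ : ∀ i ∈ univ, (0:ℝ) ≤ coef hA.1 r i m ^ 2 := fun i _ => sq_nonneg _
    have h₁ : ∑ i, coef hA.1 r i m ^ 2 = 1 := coef_sq_sum_one hA.1 hr m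
    have hmem : ∀ i ∈ univ, hA.1.eigenvalues i ∈ Set.Ici (0:ℝ) :=
      fun i _ => hA.eigenvalues_nonneg i
    have hsumm : ∑ j, coef hA.1 r j m ^ 2 * hA.1.eigenvalues j = fib r m := by
      rw [← sum_ev_coef_sq hA r hr hc m]
      congr 1; ext j; ring
    have hsum : ∑ j, coef hA.1 r j m ^ 2 • hA.1.eigenvalues j = fib r m := by
      simpa only [smul_eq_mul] using hsumm
    have hiff := Real.strictConvexOn_mul_log.map_sum_eq_iff' h₀ h₁ hmem
    have hpre : (fun x => x * Real.log x) (∑ j, coef hA.1 r j m ^ 2 • hA.1.eigenvalues j)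
        = ∑ j, coef hA.1 r j m ^ 2
            • (fun x => x * Real.log x) (hA.1.eigenvalues j) := by
      simp only [smul_eq_mul]
      rw [hsumm]
      exact hEq m (Finset.mem_univ m)
    have := (hiff.mp hpre) i (Finset.mem_univ i) (pow_ne_zero 2 hcne)
    rw [hsum] at this
    exact this
  -- A acts on each normalized indicator as multiplication by the fiber size
  have hAu : ∀ m k, (A *ᵥ uhat r m) k = fib r m * uhat r m k := by
    intro m k
    have hrow : (A *ᵥ uhat r m) k = ∑ i, hA.1.eigenvalues i
        * coef hA.1 r i m * hA.1.eigenvectorBasis i k := by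
      calc (A *ᵥ uhat r m) k = ∑ l, A k l * uhat r m l := rfl
        _ = ∑ l, ∑ i, hA.1.eigenvalues i
              * (hA.1.eigenvectorBasis i k * hA.1.eigenvectorBasis i l) * uhat r m l := by
            congr 1; ext l
            rw [spec_apply hA.1 k l, Finset.sum_mul]
        _ = ∑ i, hA.1.eigenvalues i * coef hA.1 r i m * hA.1.eigenvectorBasis i k := by
            rw [Finset.sum_comm]
            congr 1; ext i
            rw [coef, Finset.mul_sum, Finset.sum_mul]
            congr 1; ext x
            ring
    rw [hrow]
    have hterm : ∀ i, hA.1.eigenvalues i * coef hA.1 r i m * hA.1.eigenvectorBasis i k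
        = fib r m * (coef hA.1 r i m * hA.1.eigenvectorBasis i k) := by
      intro i
      by_cases h : coef hA.1 r i m = 0
      · rw [h]; ring
      · rw [hlam_eq m i h]; ring
    rw [Finset.sum_congr rfl (fun i _ => hterm i), ← Finset.mul_sum]
    congr 1
    -- ∑ i, coef i m * basis i k = uhat m k
    calc ∑ i, coef hA.1 r i m * hA.1.eigenvectorBasis i k
        = ∑ i, ∑ l, (hA.1.eigenvectorBasis i k * hA.1.eigenvectorBasis i l) * uhat r m l := by
          congr 1; ext i
          rw [coef, Finset.sum_mul]
          congr 1; ext l'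
          ring
      _ = ∑ l, (if k = l then 1 else 0) * uhat r m l := by
          rw [Finset.sum_comm]
          congr 1; ext l
          rw [← Finset.sum_mul, basis_complete hA.1]
      _ = uhat r m k := by simp [ite_mul]
  -- now compute the entries of A
  intro k l
  have hpz := mulVec_sub_projv hA hr hc (Pi.single l 1)
  rw [Matrix.mulVec_sub, sub_eq_zero] at hpz
  have h5 := congrFun hpz k
  rw [Matrix.mulVec_single] at h5
  simp only [MulOpposite.op_one, one_smul, Matrix.col_apply] at h5
  -- left side is A k l
  rw [h5]
  -- projv of a single vector
  have hproj : projv r (Pi.single l 1) = fun k' => ∑ m, uhat r m l * uhat r m k' := by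
    funext k'
    rw [projv]
    congr 1; ext m
    congr 1
    rw [Finset.sum_eq_single_of_mem l (Finset.mem_univ l)]
    · simp
    · intro l' _ hl'; simp [Pi.single_apply, hl']
  rw [hproj]
  have h6 : (A *ᵥ fun k' => ∑ m, uhat r m l * uhat r m k') k
      = ∑ m, uhat r m l * (fib r m * uhat r m k) := by
    calc (A *ᵥ fun k' => ∑ m, uhat r m l * uhat r m k') k
        = ∑ j, ∑ m, A k j * (uhat r m l * uhat r m j) := by
          simp only [Matrix.mulVec, dotProduct, Finset.mul_sum]
      _ = ∑ m, uhat r m l * ∑ j, A k j * uhat r m j := by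
          rw [Finset.sum_comm]
          congr 1; ext m
          rw [Finset.mul_sum]
          congr 1; ext j
          ring
      _ = ∑ m, uhat r m l * (fib r m * uhat r m k) := by
          congr 1; ext m
          congr 1
          exact hAu m k
  rw [h6]
  by_cases hkl : r k = r l
  · rw [if_pos hkl]
    rw [Finset.sum_eq_single_of_mem (r k) (Finset.mem_univ (r k))]
    · have hul : uhat r (r k) l = (Real.sqrt (fib r (r k)))⁻¹ := by
        simp [uhat, hkl.symm]
      have huk : uhat r (r k) k = (Real.sqrt (fib r (r k)))⁻¹ := by
        simp [uhat]
      rw [hul, huk]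
      have h1 : fib r (r k) ≠ 0 := by have := fib_ge_one r hr (r k); linarith
      have h2 := sq_sqrt_fib r (r k)
      have h3 : Real.sqrt (fib r (r k)) ≠ 0 := by
        have := sqrt_fib_pos r hr (r k); linarith
      rw [← h2]
      field_simp
      rw [Real.sqrt_sq (Real.sqrt_nonneg _)]
    · intro m' _ hm'
      have : uhat r m' k = 0 := uhat_eq_zero (fun h => hm' h.symm)
      rw [this, mul_zero, mul_zero]
  · rw [if_neg hkl]
    apply Finset.sum_eq_zero
    intro m _
    by_cases hm : r k = m
    · have : r l ≠ m := fun h => hkl (hm.trans h.symm)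
      rw [uhat_eq_zero this, zero_mul]
    · rw [uhat_eq_zero hm, mul_zero, mul_zero]


lemma entropy_Q_le {Q : Matrix (Fin L) (Fin L) ℝ} (hQpsd : Q.PosSemidef)
    {r : Fin L → Fin M} (hr : Function.Surjective r)
    (hQ : ∀ k l, Q k l = if r k = r l then 1 else 0) :
    ∑ i, hQpsd.1.eigenvalues i * Real.log (hQpsd.1.eigenvalues i)
      ≤ ∑ m, fib r m * Real.log (fib r m) := by
  classical
  have hc : ∀ k l, r k = r l → Q k l = 1 := fun k l h => by rw [hQ, if_pos h]
  have hQ2 : ∀ k l, Q k l = ∑ m, fib r m * (uhat r m k * uhat r m l) := by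
    intro k l
    rw [hQ]
    by_cases hkl : r k = r l
    · rw [if_pos hkl]
      symm
      rw [Finset.sum_eq_single_of_mem (r k) (Finset.mem_univ (r k))]
      · have hul : uhat r (r k) l = (Real.sqrt (fib r (r k)))⁻¹ := by
          simp [uhat, hkl.symm]
        have huk : uhat r (r k) k = (Real.sqrt (fib r (r k)))⁻¹ := by
          simp [uhat]
        rw [hul, huk, ← sq_sqrt_fib r (r k)]
        have h3 : Real.sqrt (fib r (r k)) ≠ 0 := by
          have := sqrt_fib_pos r hr (r k); linarith
        field_simp
        rw [Real.sqrt_sq (Real.sqrt_nonneg _)]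
      · intro m' _ hm'
        have : uhat r m' k = 0 := uhat_eq_zero (fun h => hm' h.symm)
        rw [this, zero_mul, mul_zero]
    · rw [if_neg hkl]
      symm
      apply Finset.sum_eq_zero
      intro m _
      by_cases hm : r k = m
      · have : r l ≠ m := fun h => hkl (hm.trans h.symm)
        rw [uhat_eq_zero this, mul_zero, mul_zero]
      · rw [uhat_eq_zero hm, zero_mul, mul_zero]
  have hlam : ∀ i, hQpsd.1.eigenvalues i
      = ∑ m, fib r m * coef hQpsd.1 r i m ^ 2 := by
    intro i
    set y : Fin L → ℝ := (hQpsd.1.eigenvectorBasis i : Fin L → ℝ) with hy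
    have hyy : ∑ k, y k * y k = 1 := by
      have := basis_on hQpsd.1 i i; simpa using this
    have hQy : Q *ᵥ y = hQpsd.1.eigenvalues i • y := hQpsd.1.mulVec_eigenvectorBasis i
    have h1 : ∑ k, y k * (Q *ᵥ y) k = hQpsd.1.eigenvalues i := by
      rw [hQy]
      calc ∑ k, y k * (hQpsd.1.eigenvalues i • y) k
          = hQpsd.1.eigenvalues i * ∑ k, y k * y k := by
            rw [Finset.mul_sum]
            congr 1; ext k
            simp only [← hy, Pi.smul_apply, smul_eq_mul]
            ring
        _ = hQpsd.1.eigenvalues i := by rw [hyy, mul_one]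
    rw [← h1]
    calc ∑ k, y k * (Q *ᵥ y) k
        = ∑ k, ∑ l, y k * Q k l * y l := by
          simp only [Matrix.mulVec, dotProduct, Finset.mul_sum]
          congr 1; ext k; congr 1; ext l; ring
      _ = ∑ k, ∑ l, ∑ m, fib r m * ((y k * uhat r m k) * (y l * uhat r m l)) := by
          congr 1; ext k; congr 1; ext l
          rw [hQ2 k l, Finset.mul_sum, Finset.sum_mul]
          congr 1; ext m
          ring
      _ = ∑ k, ∑ m, ∑ l, fib r m * ((y k * uhat r m k) * (y l * uhat r m l)) := by
          apply Finset.sum_congr rfl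
          intro k _
          rw [Finset.sum_comm]
      _ = ∑ m, ∑ k, ∑ l, fib r m * ((y k * uhat r m k) * (y l * uhat r m l)) := by
          rw [Finset.sum_comm]
      _ = ∑ m, fib r m * coef hQpsd.1 r i m ^ 2 := by
          apply Finset.sum_congr rfl
          intro m _
          rw [coef, sq, Finset.sum_mul_sum, Finset.mul_sum]
          simp only [← hy]
          apply Finset.sum_congr rfl
          intro k _
          rw [Finset.mul_sum]
          try apply Finset.sum_congr rfl
          try intro l _
          try ring
  have hg0 : ∀ m, 0 ≤ fib r m * Real.log (fib r m) := fun m =>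
    mul_nonneg (by linarith [fib_ge_one r hr m]) (Real.log_nonneg (fib_ge_one r hr m))
  calc ∑ i, hQpsd.1.eigenvalues i * Real.log (hQpsd.1.eigenvalues i)
      = ∑ i ∈ Finset.univ.filter (fun i => hQpsd.1.eigenvalues i ≠ 0),
          hQpsd.1.eigenvalues i * Real.log (hQpsd.1.eigenvalues i) := by
        symm
        apply Finset.sum_filter_of_ne
        intro i _ hne
        intro h0
        apply hne
        rw [h0, zero_mul]
    _ ≤ ∑ i ∈ Finset.univ.filter (fun i => hQpsd.1.eigenvalues i ≠ 0),
          ∑ m, coef hQpsd.1 r i m ^ 2 * (fib r m * Real.log (fib r m)) := by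
        apply Finset.sum_le_sum
        intro i hi
        have hine : hQpsd.1.eigenvalues i ≠ 0 := (Finset.mem_filter.mp hi).2
        have h₁ : ∑ m, coef hQpsd.1 r i m ^ 2 = 1 :=
          sum_coef_sq_eq_one hQpsd hr hc i hine
        have hmem : ∀ m ∈ univ, fib r m ∈ Set.Ici (0:ℝ) :=
          fun m _ => fib_nonneg r m
        have hJ := Real.convexOn_mul_log.map_sum_le
          (fun m (_ : m ∈ univ) => sq_nonneg (coef hQpsd.1 r i m)) h₁ hmem
        simp only [smul_eq_mul] at hJ
        have hrw : ∑ m, coef hQpsd.1 r i m ^ 2 * fib r m = hQpsd.1.eigenvalues i := by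
          rw [hlam i]
          congr 1; ext m; ring
        rwa [hrw] at hJ
    _ = ∑ m, (∑ i ∈ Finset.univ.filter (fun i => hQpsd.1.eigenvalues i ≠ 0),
          coef hQpsd.1 r i m ^ 2) * (fib r m * Real.log (fib r m)) := by
        rw [Finset.sum_comm]
        congr 1; ext m
        rw [Finset.sum_mul]
    _ ≤ ∑ m, 1 * (fib r m * Real.log (fib r m)) := by
        apply Finset.sum_le_sum
        intro m _
        apply mul_le_mul_of_nonneg_right _ (hg0 m)
        calc ∑ i ∈ Finset.univ.filter (fun i => hQpsd.1.eigenvalues i ≠ 0),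
              coef hQpsd.1 r i m ^ 2
            ≤ ∑ i, coef hQpsd.1 r i m ^ 2 :=
              Finset.sum_le_sum_of_subset_of_nonneg (Finset.filter_subset _ _)
                (fun i _ _ => sq_nonneg _)
          _ = 1 := coef_sq_sum_one hQpsd.1 hr m
    _ = ∑ m, fib r m * Real.log (fib r m) := by simp

end Stmt11Aux

/-- Given a partition of `{1,…,L}` into fibers of `r : Fin L → Fin M` and the 0/1 matrix `Q`
with `Q_{kl} = 1` iff `r k = r l`, the unique minimizer of the von Neumann entropy
`S(X) = Tr(X log X) − Tr X` over symmetric PSD matrices `X` whose principal submatrices on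
each fiber are all-ones (`X_{kl} = 1` whenever `r k = r l`) is `X = Q`. -/
theorem stmt11 {L M : ℕ} (r : Fin L → Fin M) (hr : Function.Surjective r)
    (Q : Matrix (Fin L) (Fin L) ℝ)
    (hQ : ∀ k l, Q k l = if r k = r l then 1 else 0)
    (hQpsd : Q.PosSemidef)
    (X : Matrix (Fin L) (Fin L) ℝ) (hX : X.PosSemidef)
    (hconstr : ∀ k l, r k = r l → X k l = 1) :
    ((Q * hQpsd.1.cfc Real.log).trace - Q.trace
        ≤ (X * hX.1.cfc Real.log).trace - X.trace) ∧
    ((Q * hQpsd.1.cfc Real.log).trace - Q.trace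
        = (X * hX.1.cfc Real.log).trace - X.trace → X = Q) := by
  classical
  have hcQ : ∀ k l, r k = r l → Q k l = 1 := fun k l h => by rw [hQ k l, if_pos h]
  have hTX : X.trace = (L:ℝ) := by
    have hd : ∀ k : Fin L, X.diag k = 1 := fun k => hconstr k k rfl
    rw [Matrix.trace, Finset.sum_congr rfl (fun k (_ : k ∈ univ) => hd k)]
    simp
  have hTQ : Q.trace = (L:ℝ) := by
    have hd : ∀ k : Fin L, Q.diag k = 1 := fun k => hcQ k k rfl
    rw [Matrix.trace, Finset.sum_congr rfl (fun k (_ : k ∈ univ) => hd k)]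
    simp
  have e1 := Stmt11Aux.trace_mul_cfc hQpsd.1 Real.log
  have e2 := Stmt11Aux.trace_mul_cfc hX.1 Real.log
  have key1 := Stmt11Aux.entropy_Q_le hQpsd hr hQ
  have key2 := Stmt11Aux.entropy_le hX hr hconstr
  constructor
  · rw [e1, e2, hTX, hTQ]
    have := le_trans key1 key2
    linarith
  · intro h
    rw [e1, e2, hTX, hTQ] at h
    have h3 : ∑ i, hX.1.eigenvalues i * Real.log (hX.1.eigenvalues i)
        = ∑ m, Stmt11Aux.fib r m * Real.log (Stmt11Aux.fib r m) := by linarith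
    have h4 := Stmt11Aux.entropy_eq hX hr hconstr h3
    ext k l
    rw [h4 k l, hQ k l]
end

section
/- Gibbs variational characterization used in the proofs: for β > 0 and symmetric C ∈ ℝ^{n×n}, the unique minimizer of X ↦ Tr(CX) + β^{-1}(Tr(X log X) − Tr X) over symmetric positive definite matrices X with prescribed diagonal diag(X) = d (d entrywise positive, assuming a feasible PD point exists) has the form X = exp(−β(C − diag(λ))) for some λ ∈ ℝⁿ. -/
open Matrix

namespace Stmt19Aux

variable {n : ℕ}

/-- scalar Klein upper bound -/
lemma scalar_klein {a b : ℝ} (ha : 0 < a) (hb : 0 < b) :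
    b * Real.log b ≤ b * Real.log a + b ^ 2 * a⁻¹ - b := by
  have h := Real.add_one_le_exp (Real.log b - Real.log a)
  have h' : Real.log (b / a) ≤ b / a - 1 :=
    Real.log_le_sub_one_of_pos (div_pos hb ha)
  rw [Real.log_div hb.ne' ha.ne'] at h'
  have h2 := mul_le_mul_of_nonneg_left h' hb.le
  have h3 : b * (b / a - 1) = b ^ 2 * a⁻¹ - b := by field_simp
  rw [h3] at h2
  nlinarith [h2]

lemma trace_diag_conj (W : Matrix (Fin n) (Fin n) ℝ) (f g : Fin n → ℝ) :
    (Matrix.diagonal f * W * Matrix.diagonal g * star W).trace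
      = ∑ i, ∑ j, f i * g j * (W i j) ^ 2 := by
  have hent : ∀ i j : Fin n, (Matrix.diagonal f * W * Matrix.diagonal g) i j
      = f i * W i j * g j := by
    intro i j
    rw [Matrix.mul_diagonal, Matrix.diagonal_mul]
  simp only [Matrix.trace, Matrix.diag_apply, Matrix.mul_apply, hent, Matrix.star_apply,
    star_trivial]
  refine Finset.sum_congr rfl fun i _ => Finset.sum_congr rfl fun j _ => ?_
  ring

lemma trace_conj_mul_conj (U V : Matrix (Fin n) (Fin n) ℝ) (f g : Fin n → ℝ) :
    ((U * Matrix.diagonal f * star U) * (V * Matrix.diagonal g * star V)).trace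
      = ∑ i, ∑ j, f i * g j * ((star U * V) i j) ^ 2 := by
  have h1 : (U * Matrix.diagonal f * star U) * (V * Matrix.diagonal g * star V)
      = U * (Matrix.diagonal f * (star U * V) * Matrix.diagonal g * star V) := by
    simp only [Matrix.mul_assoc]
  rw [h1, Matrix.trace_mul_comm, ← trace_diag_conj]
  have h2 : star (star U * V) = star V * U := by rw [Matrix.star_mul, star_star]
  rw [h2]
  simp only [Matrix.mul_assoc]

end Stmt19Aux

namespace Stmt19Aux

variable {n : ℕ} {A B : Matrix (Fin n) (Fin n) ℝ}

lemma spectral_real (hA : A.IsHermitian) :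
    A = (hA.eigenvectorUnitary : Matrix (Fin n) (Fin n) ℝ)
        * Matrix.diagonal hA.eigenvalues
        * star (hA.eigenvectorUnitary : Matrix (Fin n) (Fin n) ℝ) := by
  conv_lhs => rw [hA.spectral_theorem]
  rw [RCLike.ofReal_real_eq_id, Function.id_comp]
  rfl

lemma cfc_real (hA : A.IsHermitian) (f : ℝ → ℝ) :
    hA.cfc f = (hA.eigenvectorUnitary : Matrix (Fin n) (Fin n) ℝ)
        * Matrix.diagonal (fun i => f (hA.eigenvalues i))
        * star (hA.eigenvectorUnitary : Matrix (Fin n) (Fin n) ℝ) := by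
  unfold Matrix.IsHermitian.cfc
  rw [RCLike.ofReal_real_eq_id, Function.id_comp]
  rfl

lemma conj_mul_conj (V : Matrix (Fin n) (Fin n) ℝ) (hV : star V * V = 1) (f g : Fin n → ℝ) :
    (V * Matrix.diagonal f * star V) * (V * Matrix.diagonal g * star V)
      = V * Matrix.diagonal (fun i => f i * g i) * star V := by
  have h1 : (V * Matrix.diagonal f * star V) * (V * Matrix.diagonal g * star V)
      = V * Matrix.diagonal f * (star V * V) * Matrix.diagonal g * star V := by
    simp only [Matrix.mul_assoc]
  rw [h1, hV, Matrix.mul_one, Matrix.mul_assoc V, Matrix.diagonal_mul_diagonal]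

lemma trace_conj (V : Matrix (Fin n) (Fin n) ℝ) (hV : star V * V = 1) (f : Fin n → ℝ) :
    (V * Matrix.diagonal f * star V).trace = ∑ i, f i := by
  rw [Matrix.trace_mul_comm, ← Matrix.mul_assoc, hV, Matrix.one_mul, Matrix.trace_diagonal]

lemma hermitian_conj (V : Matrix (Fin n) (Fin n) ℝ) (g : Fin n → ℝ) :
    (V * Matrix.diagonal g * star V).IsHermitian := by
  rw [Matrix.star_eq_conjTranspose]
  exact Matrix.isHermitian_mul_mul_conjTranspose V (Matrix.isHermitian_diagonal g)

lemma row_sq_sum {W : Matrix (Fin n) (Fin n) ℝ} (h : W * star W = 1) (j : Fin n) :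
    ∑ i, (W j i) ^ 2 = 1 := by
  have h' : (W * star W) j j = (1 : Matrix (Fin n) (Fin n) ℝ) j j := by rw [h]
  rw [Matrix.mul_apply] at h'
  simp only [Matrix.star_apply, star_trivial, Matrix.one_apply_eq] at h'
  rw [← h']
  exact Finset.sum_congr rfl fun i _ => (sq (W j i)).symm ▸ by ring

lemma col_sq_sum {W : Matrix (Fin n) (Fin n) ℝ} (h : star W * W = 1) (i : Fin n) :
    ∑ j, (W j i) ^ 2 = 1 := by
  have h' : (star W * W) i i = (1 : Matrix (Fin n) (Fin n) ℝ) i i := by rw [h]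
  rw [Matrix.mul_apply] at h'
  simp only [Matrix.star_apply, star_trivial, Matrix.one_apply_eq] at h'
  rw [← h']
  exact Finset.sum_congr rfl fun j _ => (sq (W j i)).symm ▸ by ring

end Stmt19Aux

namespace Stmt19Aux

variable {n : ℕ} {A B : Matrix (Fin n) (Fin n) ℝ}

lemma sum_one_sq (f g : Fin n → ℝ) :
    ∑ i, ∑ j, f i * g j * ((1 : Matrix (Fin n) (Fin n) ℝ) i j) ^ 2 = ∑ i, f i * g i := by
  refine Finset.sum_congr rfl fun i _ => ?_
  rw [Finset.sum_eq_single i]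
  · rw [Matrix.one_apply_eq]; ring
  · intro j _ hj
    rw [Matrix.one_apply_ne (Ne.symm hj)]; ring
  · intro h; exact absurd (Finset.mem_univ i) h

lemma klein_upper (hA : A.PosDef) (hB : B.PosDef) :
    (B * hB.1.cfc Real.log).trace
      ≤ (B * hA.1.cfc Real.log).trace
        + (B * B * hA.1.cfc (fun x => x⁻¹)).trace - B.trace := by
  have hU1 : (hA.1.eigenvectorUnitary : Matrix (Fin n) (Fin n) ℝ) * star (hA.1.eigenvectorUnitary : Matrix (Fin n) (Fin n) ℝ) = 1 :=
    Matrix.mem_unitaryGroup_iff.mp (hA.1.eigenvectorUnitary).2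
  have hU2 : star (hA.1.eigenvectorUnitary : Matrix (Fin n) (Fin n) ℝ) * (hA.1.eigenvectorUnitary : Matrix (Fin n) (Fin n) ℝ) = 1 :=
    Matrix.mem_unitaryGroup_iff'.mp (hA.1.eigenvectorUnitary).2
  have hV1 : (hB.1.eigenvectorUnitary : Matrix (Fin n) (Fin n) ℝ) * star (hB.1.eigenvectorUnitary : Matrix (Fin n) (Fin n) ℝ) = 1 :=
    Matrix.mem_unitaryGroup_iff.mp (hB.1.eigenvectorUnitary).2
  have hV2 : star (hB.1.eigenvectorUnitary : Matrix (Fin n) (Fin n) ℝ) * (hB.1.eigenvectorUnitary : Matrix (Fin n) (Fin n) ℝ) = 1 :=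
    Matrix.mem_unitaryGroup_iff'.mp (hB.1.eigenvectorUnitary).2
  set U : Matrix (Fin n) (Fin n) ℝ := (hA.1.eigenvectorUnitary : Matrix (Fin n) (Fin n) ℝ) with hUdef
  set V : Matrix (Fin n) (Fin n) ℝ := (hB.1.eigenvectorUnitary : Matrix (Fin n) (Fin n) ℝ) with hVdef
  set a : Fin n → ℝ := hA.1.eigenvalues with hadef
  set b : Fin n → ℝ := hB.1.eigenvalues with hbdef
  set W := star V * U with hWdef
  have hW1 : W * star W = 1 := by
    rw [hWdef, Matrix.star_mul, star_star, Matrix.mul_assoc, ← Matrix.mul_assoc U, hU1,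
      Matrix.one_mul, hV2]
  have hBspec : B = V * Matrix.diagonal b * star V := spectral_real hB.1
  have T1 : (B * hB.1.cfc Real.log).trace = ∑ j, b j * Real.log (b j) := by
    have t := trace_conj_mul_conj V V b (fun i => Real.log (b i))
    rw [hV2, sum_one_sq, ← hBspec, ← cfc_real hB.1 Real.log] at t
    exact t
  have T2 : (B * hA.1.cfc Real.log).trace = ∑ j, ∑ i, b j * Real.log (a i) * (W j i) ^ 2 := by
    have t := trace_conj_mul_conj V U b (fun i => Real.log (a i))
    rw [← hBspec, ← cfc_real hA.1 Real.log] at t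
    exact t
  have e3 : B * B = V * Matrix.diagonal (fun i => b i * b i) * star V := by
    have t := conj_mul_conj V hV2 b b
    rwa [← hBspec] at t
  have T3 : (B * B * hA.1.cfc (fun x => x⁻¹)).trace
      = ∑ j, ∑ i, (b j * b j) * (a i)⁻¹ * (W j i) ^ 2 := by
    have t := trace_conj_mul_conj V U (fun i => b i * b i) (fun i => (a i)⁻¹)
    rw [← e3, ← cfc_real hA.1 (fun x => x⁻¹)] at t
    exact t
  have T4 : B.trace = ∑ j, b j := by
    have t := trace_conj V hV2 b
    rwa [← hBspec] at t
  have hrow : ∀ j, ∑ i, (W j i) ^ 2 = 1 := row_sq_sum hW1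
  have key : ∀ j i, (b j * Real.log (b j)) * (W j i) ^ 2
      ≤ (b j * Real.log (a i) + (b j) ^ 2 * (a i)⁻¹ - b j) * (W j i) ^ 2 := fun j i =>
    mul_le_mul_of_nonneg_right (scalar_klein (hA.eigenvalues_pos i) (hB.eigenvalues_pos j))
      (sq_nonneg _)
  calc (B * hB.1.cfc Real.log).trace
      = ∑ j, ∑ i, (b j * Real.log (b j)) * (W j i) ^ 2 := by
        rw [T1]
        refine Finset.sum_congr rfl fun j _ => ?_
        rw [← Finset.mul_sum, hrow, mul_one]
    _ ≤ ∑ j, ∑ i, (b j * Real.log (a i) + (b j) ^ 2 * (a i)⁻¹ - b j) * (W j i) ^ 2 :=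
        Finset.sum_le_sum fun j _ => Finset.sum_le_sum fun i _ => key j i
    _ = (B * hA.1.cfc Real.log).trace
        + (B * B * hA.1.cfc (fun x => x⁻¹)).trace - B.trace := by
        rw [T2, T3, T4]
        have h4 : ∑ j, b j = ∑ j, ∑ i, b j * (W j i) ^ 2 := by
          refine Finset.sum_congr rfl fun j _ => ?_
          rw [← Finset.mul_sum, hrow, mul_one]
        rw [h4, ← Finset.sum_add_distrib, ← Finset.sum_sub_distrib]
        refine Finset.sum_congr rfl fun j _ => ?_
        rw [← Finset.sum_add_distrib, ← Finset.sum_sub_distrib]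
        refine Finset.sum_congr rfl fun i _ => ?_
        ring

end Stmt19Aux

namespace Stmt19Aux

variable {n : ℕ} {X E : Matrix (Fin n) (Fin n) ℝ}

lemma cfc_inv_mul_self (hX : X.PosDef) :
    X * hX.1.cfc (fun x => x⁻¹) = 1 := by
  have hU1 : (hX.1.eigenvectorUnitary : Matrix (Fin n) (Fin n) ℝ) * star (hX.1.eigenvectorUnitary : Matrix (Fin n) (Fin n) ℝ) = 1 :=
    Matrix.mem_unitaryGroup_iff.mp (hX.1.eigenvectorUnitary).2
  have hU2 : star (hX.1.eigenvectorUnitary : Matrix (Fin n) (Fin n) ℝ) * (hX.1.eigenvectorUnitary : Matrix (Fin n) (Fin n) ℝ) = 1 :=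
    Matrix.mem_unitaryGroup_iff'.mp (hX.1.eigenvectorUnitary).2
  set U : Matrix (Fin n) (Fin n) ℝ := (hX.1.eigenvectorUnitary : Matrix (Fin n) (Fin n) ℝ)
  set a : Fin n → ℝ := hX.1.eigenvalues with hadef
  have t := conj_mul_conj U hU2 a (fun i => (a i)⁻¹)
  rw [← spectral_real hX.1, ← cfc_real hX.1 (fun x => x⁻¹)] at t
  have hid : (fun i => a i * (a i)⁻¹) = fun _ => (1 : ℝ) :=
    funext fun i => mul_inv_cancel₀ (hX.eigenvalues_pos i).ne'
  rw [t, hid, Matrix.diagonal_one, Matrix.mul_one, hU1]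

lemma cfc_inv_mul_self' (hX : X.PosDef) :
    hX.1.cfc (fun x => x⁻¹) * X = 1 := by
  have hU1 : (hX.1.eigenvectorUnitary : Matrix (Fin n) (Fin n) ℝ) * star (hX.1.eigenvectorUnitary : Matrix (Fin n) (Fin n) ℝ) = 1 :=
    Matrix.mem_unitaryGroup_iff.mp (hX.1.eigenvectorUnitary).2
  have hU2 : star (hX.1.eigenvectorUnitary : Matrix (Fin n) (Fin n) ℝ) * (hX.1.eigenvectorUnitary : Matrix (Fin n) (Fin n) ℝ) = 1 :=
    Matrix.mem_unitaryGroup_iff'.mp (hX.1.eigenvectorUnitary).2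
  set U : Matrix (Fin n) (Fin n) ℝ := (hX.1.eigenvectorUnitary : Matrix (Fin n) (Fin n) ℝ)
  set a : Fin n → ℝ := hX.1.eigenvalues with hadef
  have t := conj_mul_conj U hU2 (fun i => (a i)⁻¹) a
  rw [← spectral_real hX.1, ← cfc_real hX.1 (fun x => x⁻¹)] at t
  have hid : (fun i => (a i)⁻¹ * a i) = fun _ => (1 : ℝ) :=
    funext fun i => inv_mul_cancel₀ (hX.eigenvalues_pos i).ne'
  rw [t, hid, Matrix.diagonal_one, Matrix.mul_one, hU1]

/-- lower bound on the quadratic form of a positive definite matrix -/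
lemma posdef_lower (hX : X.PosDef) :
    ∃ μ > 0, ∀ x : Fin n → ℝ, μ * (x ⬝ᵥ x) ≤ x ⬝ᵥ X *ᵥ x := by
  rcases Nat.eq_zero_or_pos n with hn | hn
  · refine ⟨1, one_pos, fun x => ?_⟩
    subst hn
    simp [dotProduct]
  · have hne : (Finset.univ : Finset (Fin n)).Nonempty := by
      simpa [Finset.univ_nonempty_iff] using Fin.pos_iff_nonempty.mp hn
    set a : Fin n → ℝ := hX.1.eigenvalues with hadef
    set μ := Finset.univ.inf' hne a with hμdef
    have hμpos : 0 < μ := by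
      rw [hμdef, Finset.lt_inf'_iff]
      exact fun i _ => hX.eigenvalues_pos i
    refine ⟨μ, hμpos, fun x => ?_⟩
    have hpsd : (X - μ • 1).PosSemidef := by
      have hU1 : (hX.1.eigenvectorUnitary : Matrix (Fin n) (Fin n) ℝ) * star (hX.1.eigenvectorUnitary : Matrix (Fin n) (Fin n) ℝ) = 1 :=
        Matrix.mem_unitaryGroup_iff.mp (hX.1.eigenvectorUnitary).2
      set U : Matrix (Fin n) (Fin n) ℝ := (hX.1.eigenvectorUnitary : Matrix (Fin n) (Fin n) ℝ)
      have hdec : X - μ • 1 = U * Matrix.diagonal (fun i => a i - μ) * star U := by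
        have h1 : (μ • (1 : Matrix (Fin n) (Fin n) ℝ)) = U * Matrix.diagonal (fun _ => μ) * star U := by
          rw [Matrix.smul_one_eq_diagonal]
          have : Matrix.diagonal (fun _ : Fin n => μ) * star U = star U * Matrix.diagonal (fun _ : Fin n => μ) := by
            rw [← Matrix.smul_one_eq_diagonal, Matrix.smul_mul, Matrix.mul_smul, Matrix.one_mul,
              Matrix.mul_one]
          rw [Matrix.mul_assoc, this, ← Matrix.mul_assoc, hU1, Matrix.one_mul]
        have h2 : X = U * Matrix.diagonal a * star U := spectral_real hX.1
        rw [h2, h1, ← Matrix.sub_mul, ← Matrix.mul_sub, Matrix.diagonal_sub]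
      rw [hdec, Matrix.star_eq_conjTranspose]
      exact (Matrix.PosSemidef.diagonal (fun i => sub_nonneg.mpr
        (Finset.inf'_le a (Finset.mem_univ i)))).mul_mul_conjTranspose_same U
    have h0 := hpsd.dotProduct_mulVec_nonneg x
    have hsx : star x = x := by
      funext i; simp
    rw [hsx, Matrix.sub_mulVec, dotProduct_sub, Matrix.smul_mulVec,
      Matrix.one_mulVec, dotProduct_smul] at h0
    have : μ • (x ⬝ᵥ x) = μ * (x ⬝ᵥ x) := rfl
    linarith [h0, this ▸ h0]

lemma dot_self_pos {x : Fin n → ℝ} (hx : x ≠ 0) : 0 < x ⬝ᵥ x := by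
  obtain ⟨i, hi⟩ := Function.ne_iff.mp hx
  have : (0:ℝ) < x i * x i := mul_self_pos.mpr hi
  refine Finset.sum_pos' (fun j _ => mul_self_nonneg _) ⟨i, Finset.mem_univ i, this⟩

lemma posdef_perturb (hX : X.PosDef) (hE : E.IsHermitian)
    (hEb : ∀ x : Fin n → ℝ, |x ⬝ᵥ E *ᵥ x| ≤ x ⬝ᵥ x) :
    ∃ δ > 0, ∀ t : ℝ, |t| < δ → (X + t • E).PosDef := by
  obtain ⟨μ, hμ, hlow⟩ := posdef_lower hX
  refine ⟨μ, hμ, fun t ht => ?_⟩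
  refine Matrix.PosDef.of_dotProduct_mulVec_pos ?_ ?_
  · exact hX.1.add (by
      have : (t • E)ᴴ = t • Eᴴ := by
        ext i j; simp [Matrix.conjTranspose_apply]
      rw [Matrix.IsHermitian, this, hE.eq])
  · intro x hx
    have hsx : star x = x := by funext i; simp
    rw [hsx, Matrix.add_mulVec, dotProduct_add, Matrix.smul_mulVec,
      dotProduct_smul]
    have h1 := hlow x
    have h2 := hEb x
    have h3 : 0 < x ⬝ᵥ x := dot_self_pos hx
    have h4 : |t * (x ⬝ᵥ E *ᵥ x)| ≤ |t| * (x ⬝ᵥ x) := by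
      rw [abs_mul]
      exact mul_le_mul_of_nonneg_left h2 (abs_nonneg t)
    have h5 : -(|t| * (x ⬝ᵥ x)) ≤ t * (x ⬝ᵥ E *ᵥ x) := neg_le_of_abs_le h4
    have h6 : |t| * (x ⬝ᵥ x) < μ * (x ⬝ᵥ x) := by
      exact mul_lt_mul_of_pos_right ht h3
    have : t • (x ⬝ᵥ E *ᵥ x) = t * (x ⬝ᵥ E *ᵥ x) := rfl
    rw [this]
    linarith

lemma deriv_zero {c K δ : ℝ} (hδ : 0 < δ)
    (h : ∀ t : ℝ, |t| < δ → 0 ≤ t * c + K * t ^ 2) : c = 0 := by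
  have key : ∀ t : ℝ, 0 < t → t < δ → |c| ≤ |K| * t := by
    intro t ht htδ
    have h1 := h t (by rwa [abs_of_pos ht])
    have h2 := h (-t) (by rwa [abs_neg, abs_of_pos ht])
    have hK := le_abs_self K
    rw [abs_le]
    constructor
    · nlinarith
    · nlinarith
  by_contra hc
  have hcpos : 0 < |c| := abs_pos.mpr hc
  set t₀ := min (δ / 2) (|c| / (2 * (|K| + 1))) with ht₀
  have ht₀pos : 0 < t₀ := by
    apply lt_min (by linarith)
    positivity
  have ht₀δ : t₀ < δ := lt_of_le_of_lt (min_le_left _ _) (by linarith)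
  have hk := key t₀ ht₀pos ht₀δ
  have h2 : t₀ ≤ |c| / (2 * (|K| + 1)) := min_le_right _ _
  have hKnn : (0:ℝ) ≤ |K| := abs_nonneg K
  have : |K| * t₀ ≤ |K| * (|c| / (2 * (|K| + 1))) := mul_le_mul_of_nonneg_left h2 hKnn
  have hlt : |K| * (|c| / (2 * (|K| + 1))) < |c| := by
    have hqpos : 0 < |c| / (2 * (|K| + 1)) := by positivity
    have e : |c| / (2 * (|K| + 1)) * (2 * (|K| + 1)) = |c| := div_mul_cancel₀ _ (by positivity)
    nlinarith [hqpos, hKnn]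
  linarith

end Stmt19Aux

namespace Stmt19Aux

variable {n : ℕ}

lemma trace_mul_single (A : Matrix (Fin n) (Fin n) ℝ) (p q : Fin n) :
    (A * Matrix.single p q (1:ℝ)).trace = A q p := by
  have hent : ∀ k, (A * Matrix.single p q (1:ℝ)) k k
      = if k = q then A k p else 0 := by
    intro k
    by_cases h : k = q
    · subst h
      rw [Matrix.mul_single_apply_same, mul_one, if_pos rfl]
    · rw [Matrix.mul_single_apply_of_ne (hbj := h), if_neg h]
  simp only [Matrix.trace, Matrix.diag_apply, hent]
  simp

lemma dot_mulVec_single (p q : Fin n) (x : Fin n → ℝ) :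
    x ⬝ᵥ (Matrix.single p q (1:ℝ)) *ᵥ x = x p * x q := by
  rw [Matrix.single_mulVec, one_mul]
  have h : Function.update (0 : Fin n → ℝ) p (x q) = Pi.single p (x q) := rfl
  rw [h, dotProduct_single]

end Stmt19Aux


open NormedSpace in
/-- Gibbs variational characterization: for `β > 0` and symmetric `C`, a positive definite
minimizer `X` of `X ↦ Tr(CX) + β⁻¹ (Tr(X log X) − Tr X)` over symmetric positive definite
matrices with prescribed (positive) diagonal `d` has the form
`X = exp(−β(C − diag λ))` for some `λ ∈ ℝⁿ`. -/
theorem stmt19 {n : ℕ} (β : ℝ) (hβ : 0 < β)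
    (C : Matrix (Fin n) (Fin n) ℝ) (hC : C.IsHermitian)
    (d : Fin n → ℝ) (hd : ∀ i, 0 < d i)
    (F : (X : Matrix (Fin n) (Fin n) ℝ) → X.IsHermitian → ℝ)
    (hF : ∀ X hX, F X hX
      = (C * X).trace + β⁻¹ * ((X * Matrix.IsHermitian.cfc hX Real.log).trace - X.trace))
    (X : Matrix (Fin n) (Fin n) ℝ) (hX : X.PosDef) (hXd : ∀ i, X i i = d i)
    (hmin : ∀ Y (hY : Y.PosDef), (∀ i, Y i i = d i) → F X hX.1 ≤ F Y hY.1) :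
    ∃ lam : Fin n → ℝ, X = exp ((-β) • (C - Matrix.diagonal lam)) := by
  classical
  open Stmt19Aux in
  set L := hX.1.cfc Real.log with hLdef
  set J := hX.1.cfc (fun x => x⁻¹) with hJdef
  have hXJ : X * J = 1 := cfc_inv_mul_self hX
  have hJX : J * X = 1 := cfc_inv_mul_self' hX
  have hLherm : L.IsHermitian := by
    rw [hLdef, cfc_real hX.1 Real.log]
    exact hermitian_conj _ _
  have hbinv : (0:ℝ) ≤ β⁻¹ := inv_nonneg.mpr hβ.le
  -- off-diagonal stationarity
  have hoff : ∀ p q : Fin n, p ≠ q → C p q + β⁻¹ * L p q = 0 := by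
    intro p q hpq
    set E := Matrix.single p q (1:ℝ) + Matrix.single q p (1:ℝ) with hEdef
    have h1T : (Matrix.single p q (1:ℝ))ᴴ = Matrix.single q p 1 := by
      ext i j
      simp only [Matrix.conjTranspose_apply, Matrix.single, Matrix.of_apply, star_trivial]
      by_cases h : p = j ∧ q = i
      · rw [if_pos h, if_pos ⟨h.2, h.1⟩]
      · rw [if_neg h, if_neg (by tauto)]
    have h2T : (Matrix.single q p (1:ℝ))ᴴ = Matrix.single p q 1 := by
      ext i j
      simp only [Matrix.conjTranspose_apply, Matrix.single, Matrix.of_apply, star_trivial]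
      by_cases h : q = j ∧ p = i
      · rw [if_pos h, if_pos ⟨h.2, h.1⟩]
      · rw [if_neg h, if_neg (by tauto)]
    have hEherm : E.IsHermitian := by
      rw [Matrix.IsHermitian, hEdef, Matrix.conjTranspose_add, h1T, h2T, add_comm]
    have hEdiag : ∀ k, E k k = 0 := by
      intro k
      rw [hEdef, Matrix.add_apply,
        Matrix.single_apply_of_ne (h := fun hh => hpq (hh.1.trans hh.2.symm)),
        Matrix.single_apply_of_ne (h := fun hh => hpq (hh.2.trans hh.1.symm)),
        add_zero]
    have hEb : ∀ x : Fin n → ℝ, |x ⬝ᵥ E *ᵥ x| ≤ x ⬝ᵥ x := by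
      intro x
      rw [hEdef, Matrix.add_mulVec, dotProduct_add, dot_mulVec_single, dot_mulVec_single]
      have h1 : x p * x p + x q * x q ≤ x ⬝ᵥ x := by
        have hsub := Finset.sum_le_sum_of_subset_of_nonneg
          (Finset.subset_univ ({p, q} : Finset (Fin n)))
          (fun i _ _ => mul_self_nonneg (x i))
        rw [Finset.sum_pair hpq] at hsub
        exact hsub
      rw [abs_le]
      constructor <;> nlinarith [sq_nonneg (x p + x q), sq_nonneg (x p - x q)]
    obtain ⟨δ, hδ, hPD⟩ := posdef_perturb hX hEherm hEb
    have hTrE : E.trace = 0 := by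
      simp only [Matrix.trace, Matrix.diag_apply, hEdiag, Finset.sum_const_zero]
    have hTrCE : (C * E).trace = 2 * C p q := by
      rw [hEdef, Matrix.mul_add, Matrix.trace_add, trace_mul_single, trace_mul_single]
      have := hC.apply p q
      simp only [star_trivial] at this
      linarith [this]
    have hTrEL : (E * L).trace = 2 * L p q := by
      rw [Matrix.trace_mul_comm, hEdef, Matrix.mul_add, Matrix.trace_add, trace_mul_single,
        trace_mul_single]
      have := hLherm.apply p q
      simp only [star_trivial] at this
      linarith [this]
    have hsand : ∀ t : ℝ, |t| < δ →
        0 ≤ t * ((C * E).trace + β⁻¹ * (E * L).trace) + (β⁻¹ * (E * E * J).trace) * t ^ 2 := by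
      intro t ht
      have hB := hPD t ht
      have hBd : ∀ k, (X + t • E) k k = d k := by
        intro k
        rw [Matrix.add_apply, Matrix.smul_apply, hEdiag, smul_zero, add_zero]
        exact hXd k
      have h0 := hmin (X + t • E) hB hBd
      rw [hF X hX.1, hF (X + t • E) hB.1] at h0
      have hkl := klein_upper hX hB
      rw [← hLdef, ← hJdef] at hkl
      -- expand the linear pieces
      have e1 : (C * (X + t • E)).trace = (C * X).trace + t * (C * E).trace := by
        rw [Matrix.mul_add, Matrix.trace_add, Matrix.mul_smul, Matrix.trace_smul, smul_eq_mul]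
      have e4 : (X + t • E).trace = X.trace + t * E.trace := by
        rw [Matrix.trace_add, Matrix.trace_smul, smul_eq_mul]
      have e2 : ((X + t • E) * L).trace = (X * L).trace + t * (E * L).trace := by
        rw [Matrix.add_mul, Matrix.trace_add, Matrix.smul_mul, Matrix.trace_smul, smul_eq_mul]
      have e3 : ((X + t • E) * (X + t • E) * J).trace
          = X.trace + 2 * t * E.trace + t ^ 2 * (E * E * J).trace := by
        have hXXJ : (X * X * J).trace = X.trace := by
          rw [Matrix.mul_assoc, hXJ, Matrix.mul_one]
        have hXEJ : (X * E * J).trace = E.trace := by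
          rw [Matrix.trace_mul_comm, ← Matrix.mul_assoc, hJX, Matrix.one_mul]
        have hEXJ : (E * X * J).trace = E.trace := by
          rw [Matrix.mul_assoc, hXJ, Matrix.mul_one]
        have expand : (X + t • E) * (X + t • E) * J
            = X * X * J + t • (X * E * J) + t • (E * X * J) + (t * t) • (E * E * J) := by
          simp only [Matrix.add_mul, Matrix.mul_add, Matrix.smul_mul, Matrix.mul_smul,
            smul_smul, smul_add]
          abel
        rw [expand, Matrix.trace_add, Matrix.trace_add, Matrix.trace_add, Matrix.trace_smul,
          Matrix.trace_smul, Matrix.trace_smul, hXXJ, hXEJ, hEXJ]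
        simp only [smul_eq_mul]
        ring
      rw [e1, e4] at h0
      rw [e2, e3, e4] at hkl
      have hkl2 : β⁻¹ * (((X + t • E) * Matrix.IsHermitian.cfc hB.1 Real.log).trace
            - ((X * L).trace + t * (E * L).trace) - t * E.trace)
          ≤ β⁻¹ * (t ^ 2 * (E * E * J).trace) := by
        apply mul_le_mul_of_nonneg_left _ hbinv
        nlinarith [hkl]
      nlinarith [h0, hkl2]
    have hc0 := deriv_zero hδ hsand
    rw [hTrCE, hTrEL] at hc0
    linarith [hc0]
  -- conclude
  refine ⟨fun i => C i i + β⁻¹ * L i i, ?_⟩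
  have harg : (-β) • (C - Matrix.diagonal fun i => C i i + β⁻¹ * L i i) = L := by
    ext p q
    by_cases h : p = q
    · subst h
      rw [Matrix.smul_apply, Matrix.sub_apply, Matrix.diagonal_apply_eq, smul_eq_mul]
      field_simp
      ring
    · have h0 := hoff p q h
      rw [Matrix.smul_apply, Matrix.sub_apply, Matrix.diagonal_apply_ne _ h, smul_eq_mul]
      have : C p q = -(β⁻¹ * L p q) := by linarith
      rw [this]
      field_simp
      ring
  rw [harg]
  open scoped Matrix.Norms.L2Operator in
  letI : NormedRing (Matrix (Fin n) (Fin n) ℝ) := inferInstance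
  open scoped Matrix.Norms.L2Operator in
  letI : NormedAlgebra ℝ (Matrix (Fin n) (Fin n) ℝ) := inferInstance
  have hlog : CFC.log X = L := by
    rw [CFC.log, Matrix.IsHermitian.cfc_eq hX.1, hLdef]
  have hexp := by open scoped MatrixOrder in exact CFC.exp_log X hX.isStrictlyPositive
  rw [← hlog]
  exact hexp.symm
end
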